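/- arXiv:1101.2713 — 5 statements merged into one kernel-verified Lean document; each statement's English description precedes it below -/
import Mathlib

section
/- For every pair of fixed points τ₁, τ₂ ∈ ℝ and every λ ≥ 0, the increment of the Rademacher process satisfies P( |Z'(τ₁) − Z'(τ₂)| > λ ) ≤ 2·exp( −λ² / ( |A|²·M₃²·|Ω|²·|τ₁−τ₂|² ) ). -/
open MeasureTheory ProbabilityTheory Real Set

noncomputable section

section AuxRadTail
variable {Θ : Type*} [MeasurableSpace Θ]

lemma two_mul_pow_le (x y : ℝ) (n : ℕ) :
    2 * (x ^ 2 + y ^ 2) ^ n ≤ ((x+y) ^ 2) ^ n + ((x-y) ^ 2) ^ n := by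
  have h := (convexOn_pow n).2 (Set.mem_Ici.2 (by positivity : (0:ℝ) ≤ (x+y)^2))
    (Set.mem_Ici.2 (by positivity : (0:ℝ) ≤ (x-y)^2))
    (by norm_num : (0:ℝ) ≤ 1/2) (by norm_num : (0:ℝ) ≤ 1/2) (by norm_num)
  simp only [smul_eq_mul] at h
  have he : (1/2 : ℝ) * (x+y)^2 + (1/2) * (x-y)^2 = x^2 + y^2 := by ring
  rw [he] at h
  linarith

lemma cosh_sqrt_le_cosh_mul_cosh (x y : ℝ) :
    Real.cosh (Real.sqrt (x ^ 2 + y ^ 2)) ≤ Real.cosh x * Real.cosh y := by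
  have hxy : (0:ℝ) ≤ x ^ 2 + y ^ 2 := by positivity
  have h1 : HasSum (fun n : ℕ => 2 * ((Real.sqrt (x^2+y^2)) ^ (2*n) / ((Nat.factorial (2*n)) : ℝ)))
      (2 * Real.cosh (Real.sqrt (x^2+y^2))) := (Real.hasSum_cosh _).mul_left 2
  have h2 : HasSum (fun n : ℕ => ((x+y) ^ (2*n) / ((Nat.factorial (2*n)) : ℝ) + (x-y) ^ (2*n) / ((Nat.factorial (2*n)) : ℝ)))
      (Real.cosh (x+y) + Real.cosh (x-y)) := (Real.hasSum_cosh _).add (Real.hasSum_cosh _)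
  have key : ∀ n : ℕ, 2 * ((Real.sqrt (x^2+y^2)) ^ (2*n) / ((Nat.factorial (2*n)) : ℝ)) ≤
      (x+y) ^ (2*n) / ((Nat.factorial (2*n)) : ℝ) + (x-y) ^ (2*n) / ((Nat.factorial (2*n)) : ℝ) := by
    intro n
    have hfac : (0:ℝ) ≤ ((Nat.factorial (2*n)) : ℝ) := by positivity
    rw [← add_div, ← mul_div_assoc]
    have hs : (Real.sqrt (x^2+y^2)) ^ (2*n) = (x^2+y^2)^n := by
      rw [pow_mul, Real.sq_sqrt hxy]
    rw [hs]
    have hnum : 2 * (x^2+y^2)^n ≤ (x+y) ^ (2*n) + (x-y) ^ (2*n) := by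
      rw [pow_mul, pow_mul]; exact two_mul_pow_le x y n
    gcongr
  have hle := hasSum_le key h1 h2
  have hadd : Real.cosh (x+y) + Real.cosh (x-y) = 2 * (Real.cosh x * Real.cosh y) := by
    rw [Real.cosh_add, Real.cosh_sub]; ring
  linarith

lemma norm_exp_I_sub_exp_I_le (a b : ℝ) :
    ‖Complex.exp (Complex.I * a) - Complex.exp (Complex.I * b)‖ ≤ |a - b| := by
  have ha : Complex.exp (Complex.I * a) = Complex.cos a + Complex.sin a * Complex.I := by
    rw [mul_comm, Complex.exp_mul_I]
  have hb : Complex.exp (Complex.I * b) = Complex.cos b + Complex.sin b * Complex.I := by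
    rw [mul_comm, Complex.exp_mul_I]
  rw [ha, hb]
  have hre : (Complex.cos a + Complex.sin a * Complex.I
      - (Complex.cos b + Complex.sin b * Complex.I)).re = Real.cos a - Real.cos b := by
    simp [Complex.cos_ofReal_re, Complex.sin_ofReal_re]
  have him : (Complex.cos a + Complex.sin a * Complex.I
      - (Complex.cos b + Complex.sin b * Complex.I)).im = Real.sin a - Real.sin b := by
    simp [Complex.cos_ofReal_re, Complex.sin_ofReal_re]
  rw [Complex.norm_def, Complex.normSq_apply, hre, him]
  have hcos : (Real.cos a - Real.cos b) * (Real.cos a - Real.cos b)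
      + (Real.sin a - Real.sin b) * (Real.sin a - Real.sin b) = 2 - 2 * Real.cos (a - b) := by
    rw [Real.cos_sub]
    nlinarith [Real.sin_sq_add_cos_sq a, Real.sin_sq_add_cos_sq b]
  rw [hcos]
  have h1 : Real.sin ((a-b)/2) ^ 2 ≤ ((a-b)/2) ^ 2 := Real.sin_sq_le_sq
  have h2 : Real.cos ((a-b)/2) ^ 2 = 1/2 + Real.cos (a-b) / 2 := by
    have := Real.cos_sq ((a-b)/2)
    rwa [show 2 * ((a-b)/2) = a - b by ring] at this
  have h3 : Real.sin ((a-b)/2) ^ 2 + Real.cos ((a-b)/2) ^ 2 = 1 := Real.sin_sq_add_cos_sq _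
  have hb2 : 2 - 2 * Real.cos (a - b) ≤ (a-b)^2 := by nlinarith
  calc Real.sqrt (2 - 2 * Real.cos (a-b)) ≤ Real.sqrt ((a-b)^2) := Real.sqrt_le_sqrt hb2
    _ = |a - b| := Real.sqrt_sq_eq_abs _


lemma integrable_dirac' (f : ℝ → ℝ) (a : ℝ) : Integrable f (Measure.dirac a) := by
  have hae : ∀ᵐ x ∂(Measure.dirac a), f a = f x := by
    rw [MeasureTheory.ae_dirac_eq]; exact Filter.eventually_pure.2 rfl
  exact (integrable_const (f a)).congr hae

lemma rademacher_ae_abs_le_one (μ : Measure Θ) (e : Θ → ℝ) (he : Measurable e)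
    (hrad : μ.map e = (2 : ENNReal)⁻¹ • (Measure.dirac (1 : ℝ) + Measure.dirac (-1 : ℝ))) :
    ∀ᵐ θ ∂μ, |e θ| ≤ 1 := by
  rw [ae_iff]
  have hms : MeasurableSet {x : ℝ | ¬ |x| ≤ 1} := by
    have : {x : ℝ | ¬ |x| ≤ 1} = {x : ℝ | 1 < |x|} := by ext x; simp [not_le]
    rw [this]
    exact measurableSet_lt measurable_const measurable_abs
  have : {θ | ¬ |e θ| ≤ 1} = e ⁻¹' {x | ¬ |x| ≤ 1} := rfl
  rw [this, ← Measure.map_apply he hms, hrad]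
  simp only [Measure.smul_apply, Measure.add_apply, smul_eq_mul]
  rw [Measure.dirac_apply' _ hms, Measure.dirac_apply' _ hms]
  simp

lemma rademacher_integral_exp (μ : Measure Θ) (e : Θ → ℝ) (he : Measurable e)
    (hrad : μ.map e = (2 : ENNReal)⁻¹ • (Measure.dirac (1 : ℝ) + Measure.dirac (-1 : ℝ)))
    (c : ℝ) : ∫ θ, Real.exp (c * e θ) ∂μ = Real.cosh c := by
  have hg : Measurable (fun x : ℝ => Real.exp (c * x)) := by fun_prop
  rw [← integral_map he.aemeasurable hg.aestronglyMeasurable, hrad]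
  rw [integral_smul_measure, integral_add_measure (_root_.integrable_dirac' _ _) (_root_.integrable_dirac' _ _),
    integral_dirac, integral_dirac, Real.cosh_eq]
  simp [ENNReal.toReal_inv]
  ring


-- mgf of a Rademacher linear combination
lemma rademacher_mgf_sum (μ : Measure Θ) [IsProbabilityMeasure μ]
    {m : ℕ} (ε : Fin m → Θ → ℝ) (hεmeas : ∀ k, Measurable (ε k))
    (hindep : iIndepFun ε μ)
    (hrad : ∀ k, μ.map (ε k) = (2 : ENNReal)⁻¹ • (Measure.dirac (1 : ℝ) + Measure.dirac (-1 : ℝ)))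
    (hradint : ∀ (e : Θ → ℝ), Measurable e →
      μ.map e = (2 : ENNReal)⁻¹ • (Measure.dirac (1 : ℝ) + Measure.dirac (-1 : ℝ)) →
      ∀ c : ℝ, ∫ θ, Real.exp (c * e θ) ∂μ = Real.cosh c)
    (d : Fin m → ℝ) (s : ℝ) :
    ∫ θ, Real.exp (s * ∑ k, ε k θ * d k) ∂μ = ∏ k, Real.cosh (s * d k) := by
  classical
  set X : Fin m → Θ → ℝ := fun k θ => ε k θ * d k with hX
  have hXmeas : ∀ k, Measurable (X k) := fun k => (hεmeas k).mul_const _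
  have hXindep : iIndepFun X μ := by
    have := hindep.comp (g := fun (k : Fin m) (r : ℝ) => r * d k)
      (fun k => measurable_id.mul_const _)
    exact this
  have hfun : (fun θ => Real.exp (s * ∑ k, ε k θ * d k))
      = fun θ => Real.exp (s * (∑ k, X k) θ) := by
    funext θ; simp [hX, Finset.sum_apply]
  have hmgf := hXindep.mgf_sum hXmeas Finset.univ (t := s)
  have hL : ∫ θ, Real.exp (s * ∑ k, ε k θ * d k) ∂μ = mgf (∑ k, X k) μ s := by
    rw [mgf]; rw [hfun]
  rw [hL, hmgf]
  refine Finset.prod_congr rfl (fun k _ => ?_)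
  rw [mgf]
  have : (fun θ => Real.exp (s * X k θ)) = fun θ => Real.exp ((s * d k) * ε k θ) := by
    funext θ; rw [hX]; ring_nf
  rw [this]
  exact hradint (ε k) (hεmeas k) (hrad k) (s * d k)


section Rot
-- rotation facts
lemma rotation_exists (m : ℕ) (v : Fin m → ℂ) :
    ∃ c : ℂ, ‖c‖ = 1 ∧ (∑ k, (c * v k)^2).im = 0 := by
  classical
  set w : ℂ := ∑ k, (v k)^2 with hw
  refine ⟨Complex.exp (Complex.I * (-(w.arg) / 2 : ℝ)), ?_, ?_⟩
  · rw [Complex.norm_exp]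
    simp
  · have hsq : ∑ k, (Complex.exp (Complex.I * (-(w.arg) / 2 : ℝ)) * v k)^2
        = Complex.exp (Complex.I * (-(w.arg) / 2 : ℝ))^2 * w := by
      rw [hw, Finset.mul_sum]
      exact Finset.sum_congr rfl (fun k _ => by ring)
    rw [hsq]
    have hc2 : Complex.exp (Complex.I * (-(w.arg) / 2 : ℝ))^2
        = Complex.exp (Complex.I * (-(w.arg) : ℝ)) := by
      rw [← Complex.exp_nat_mul]
      congr 1
      push_cast
      ring
    rw [hc2]
    nth_rewrite 2 [← Complex.norm_mul_exp_arg_mul_I w]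
    have h1 : Complex.exp (Complex.I * (-(w.arg) : ℝ)) * ((‖w‖ : ℂ)
        * Complex.exp (w.arg * Complex.I))
      = (‖w‖ : ℂ) * Complex.exp (Complex.I * (-(w.arg) : ℝ) + w.arg * Complex.I) := by
        rw [Complex.exp_add]; ring
    have h2 : Complex.I * ((-(w.arg) : ℝ) : ℂ) + (w.arg : ℂ) * Complex.I = 0 := by
      push_cast; ring
    rw [h1, h2]
    simp
end Rot

lemma rademacher_sum_tail (μ : Measure Θ) [IsProbabilityMeasure μ]
    {m : ℕ} (ε : Fin m → Θ → ℝ) (hεmeas : ∀ k, Measurable (ε k))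
    (hindep : iIndepFun ε μ)
    (hrad : ∀ k, μ.map (ε k) = (2 : ENNReal)⁻¹ • (Measure.dirac (1 : ℝ) + Measure.dirac (-1 : ℝ)))
    (v : Fin m → ℂ) {σ2 : ℝ} (hσpos : 0 < σ2) (hσ : ∑ k, ‖v k‖^2 ≤ σ2)
    {lam : ℝ} (hlam : 0 ≤ lam) :
    μ {θ | lam < ‖∑ k, (ε k θ : ℂ) * v k‖}
      ≤ ENNReal.ofReal (2 * Real.exp (-lam^2 / (2*σ2))) := by
  classical
  obtain ⟨c, hc1, hc0⟩ := rotation_exists m v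
  set t : ℝ := lam / σ2 with ht
  have htpos : 0 ≤ t := div_nonneg hlam hσpos.le
  set x : Fin m → ℝ := fun k => (c * v k).re with hxdef
  set y : Fin m → ℝ := fun k => (c * v k).im with hydef
  have hnorm : ∀ k, x k ^ 2 + y k ^ 2 = ‖v k‖ ^ 2 := by
    intro k
    have h : ‖v k‖ = ‖c * v k‖ := by
      rw [norm_mul, hc1, one_mul]
    rw [h, Complex.sq_norm, Complex.normSq_apply]
    simp only [hxdef, hydef]
    ring
  have horth : ∑ k, x k * y k = 0 := by
    have h1 : (∑ k, (c * v k)^2).im = ∑ k, 2 * (x k * y k) := by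
      rw [Complex.im_sum]
      refine Finset.sum_congr rfl (fun k _ => ?_)
      rw [sq, Complex.mul_im]; ring
    have h2 : ∑ k, 2 * (x k * y k) = 0 := by rw [← h1, hc0]
    rw [← Finset.mul_sum] at h2
    linarith
  set S : Θ → ℂ := fun θ => ∑ k, (ε k θ : ℂ) * v k with hSdef
  set Rp : Θ → ℝ := fun θ => ∑ k, ε k θ * (x k + y k) with hRp
  set Rm : Θ → ℝ := fun θ => ∑ k, ε k θ * (x k - y k) with hRm
  have hkey : ∀ θ, Real.exp (t * ‖S θ‖) ≤ Real.cosh (t * Rp θ) + Real.cosh (t * Rm θ) := by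
    intro θ
    set X : ℝ := ∑ k, ε k θ * x k with hX
    set Y : ℝ := ∑ k, ε k θ * y k with hY
    have hcS : c * S θ = ∑ k, (ε k θ : ℂ) * (c * v k) := by
      rw [hSdef, Finset.mul_sum]; exact Finset.sum_congr rfl fun k _ => by ring
    have hre : (c * S θ).re = X := by
      rw [hcS, Complex.re_sum, hX]
      exact Finset.sum_congr rfl fun k _ => by rw [Complex.re_ofReal_mul]
    have him : (c * S θ).im = Y := by
      rw [hcS, Complex.im_sum, hY]
      exact Finset.sum_congr rfl fun k _ => by rw [Complex.im_ofReal_mul]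
    have hnS : ‖S θ‖ = Real.sqrt (X ^ 2 + Y ^ 2) := by
      have h : ‖S θ‖ = ‖c * S θ‖ := by
        rw [norm_mul, hc1, one_mul]
      rw [h, Complex.norm_def, Complex.normSq_apply, hre, him]
      congr 1; ring
    have ht1 : t * ‖S θ‖ = Real.sqrt ((t*X)^2 + (t*Y)^2) := by
      rw [hnS, show (t*X)^2 + (t*Y)^2 = t^2 * (X^2+Y^2) by ring,
        Real.sqrt_mul (sq_nonneg t), Real.sqrt_sq htpos]
    have e1 : Real.exp (t * ‖S θ‖) ≤ 2 * Real.cosh (t * ‖S θ‖) := by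
      rw [Real.cosh_eq]; have := (Real.exp_pos (-(t * ‖S θ‖))).le; linarith
    have e2 : Real.cosh (t * ‖S θ‖) ≤ Real.cosh (t*X) * Real.cosh (t*Y) := by
      rw [ht1]; exact cosh_sqrt_le_cosh_mul_cosh _ _
    have e3 : 2 * (Real.cosh (t*X) * Real.cosh (t*Y))
        = Real.cosh (t*X + t*Y) + Real.cosh (t*X - t*Y) := by
      rw [Real.cosh_add, Real.cosh_sub]; ring
    have hXYp : t*X + t*Y = t * Rp θ := by
      rw [hX, hY, hRp, ← mul_add, ← Finset.sum_add_distrib]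
      congr 1
      exact Finset.sum_congr rfl fun k _ => by ring
    have hXYm : t*X - t*Y = t * Rm θ := by
      rw [hX, hY, hRm, ← mul_sub, ← Finset.sum_sub_distrib]
      congr 1
      exact Finset.sum_congr rfl fun k _ => by ring
    rw [← hXYp, ← hXYm, ← e3]
    nlinarith [Real.cosh_pos (t * ‖S θ‖), Real.cosh_pos (t*X), Real.cosh_pos (t*Y)]
  have haeall : ∀ᵐ θ ∂μ, ∀ k, |ε k θ| ≤ 1 :=
    (ae_all_iff).2 fun k => rademacher_ae_abs_le_one μ (ε k) (hεmeas k) (hrad k)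
  have hsummeas : ∀ d : Fin m → ℝ, Measurable (fun θ => ∑ k, ε k θ * d k) :=
    fun d => Finset.measurable_sum _ (fun k _ => (hεmeas k).mul_const _)
  have hint : ∀ (d : Fin m → ℝ) (s : ℝ),
      Integrable (fun θ => Real.exp (s * ∑ k, ε k θ * d k)) μ := by
    intro d s
    refine Integrable.mono' (integrable_const (Real.exp (|s| * ∑ k, |d k|)))
      (((hsummeas d).const_mul s).exp.aestronglyMeasurable) ?_
    filter_upwards [haeall] with θ hθ
    rw [Real.norm_eq_abs, Real.abs_exp, Real.exp_le_exp]
    have hb : |∑ k, ε k θ * d k| ≤ ∑ k, |d k| := by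
      refine (Finset.abs_sum_le_sum_abs _ _).trans ?_
      refine Finset.sum_le_sum fun k _ => ?_
      rw [abs_mul]
      exact mul_le_of_le_one_left (abs_nonneg _) (hθ k)
    calc s * ∑ k, ε k θ * d k ≤ |s * ∑ k, ε k θ * d k| := le_abs_self _
      _ = |s| * |∑ k, ε k θ * d k| := abs_mul _ _
      _ ≤ |s| * ∑ k, |d k| := mul_le_mul_of_nonneg_left hb (abs_nonneg s)
  have hcosheq : ∀ d : Fin m → ℝ, (fun θ => Real.cosh (t * ∑ k, ε k θ * d k))
      = fun θ => (Real.exp (t * ∑ k, ε k θ * d k) + Real.exp ((-t) * ∑ k, ε k θ * d k)) / 2 := by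
    intro d; funext θ; rw [Real.cosh_eq, neg_mul]
  have hintcosh : ∀ d : Fin m → ℝ,
      Integrable (fun θ => Real.cosh (t * ∑ k, ε k θ * d k)) μ := by
    intro d
    rw [hcosheq d]
    exact ((hint d t).add (hint d (-t))).div_const 2
  have hEcosh : ∀ d : Fin m → ℝ,
      ∫ θ, Real.cosh (t * ∑ k, ε k θ * d k) ∂μ = ∏ k, Real.cosh (t * d k) := by
    intro d
    rw [hcosheq d, integral_div, integral_add (hint d t) (hint d (-t)),
      rademacher_mgf_sum μ ε hεmeas hindep hrad
        (fun e he hre => rademacher_integral_exp μ e he hre) d t,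
      rademacher_mgf_sum μ ε hεmeas hindep hrad
        (fun e he hre => rademacher_integral_exp μ e he hre) d (-t)]
    have hc : ∀ k : Fin m, k ∈ Finset.univ → Real.cosh ((-t) * d k) = Real.cosh (t * d k) :=
      fun k _ => by rw [neg_mul, Real.cosh_neg]
    rw [Finset.prod_congr rfl hc]
    ring
  have hSmeas : Measurable S := by
    rw [hSdef]
    exact Finset.measurable_sum _
      fun k _ => (Complex.measurable_ofReal.comp (hεmeas k)).mul_const _
  have hSbound : ∀ᵐ θ ∂μ, ‖S θ‖ ≤ ∑ k, ‖v k‖ := by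
    filter_upwards [haeall] with θ hθ
    refine (norm_sum_le _ _).trans (Finset.sum_le_sum fun k _ => ?_)
    rw [norm_mul, Complex.norm_real]
    exact mul_le_of_le_one_left (norm_nonneg _) (hθ k)
  have hintS : Integrable (fun θ => Real.exp (t * ‖S θ‖)) μ := by
    refine Integrable.mono' (integrable_const (Real.exp (t * ∑ k, ‖v k‖)))
      ((hSmeas.norm.const_mul t).exp.aestronglyMeasurable) ?_
    filter_upwards [hSbound] with θ hθ
    rw [Real.norm_eq_abs, Real.abs_exp, Real.exp_le_exp]
    exact mul_le_mul_of_nonneg_left hθ htpos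
  have hcher := measure_ge_le_exp_mul_mgf (X := fun θ => ‖S θ‖) (μ := μ) (t := t) lam htpos hintS
  have hprodle : ∀ d : Fin m → ℝ, (∑ k, d k ^ 2 ≤ σ2) →
      ∏ k, Real.cosh (t * d k) ≤ Real.exp (t^2 * σ2 / 2) := by
    intro d hd
    calc ∏ k, Real.cosh (t * d k) ≤ ∏ k, Real.exp ((t * d k)^2 / 2) :=
          Finset.prod_le_prod (fun k _ => (Real.cosh_pos _).le)
            (fun k _ => Real.cosh_le_exp_half_sq _)
      _ = Real.exp (∑ k, (t * d k)^2 / 2) := (Real.exp_sum _ _).symm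
      _ ≤ Real.exp (t^2 * σ2 / 2) := by
          rw [Real.exp_le_exp]
          have h : ∑ k, (t * d k)^2 / 2 = t^2 / 2 * ∑ k, d k^2 := by
            rw [Finset.mul_sum]; exact Finset.sum_congr rfl fun k _ => by ring
          rw [h]
          calc t^2/2 * ∑ k, d k^2 ≤ t^2/2 * σ2 :=
                mul_le_mul_of_nonneg_left hd (by positivity)
            _ = t^2 * σ2 / 2 := by ring
  have hple : ∑ k, (x k + y k)^2 ≤ σ2 := by
    have h : ∑ k, (x k + y k)^2 = ∑ k, ‖v k‖^2 + 2 * ∑ k, x k * y k := by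
      rw [Finset.mul_sum, ← Finset.sum_add_distrib]
      exact Finset.sum_congr rfl fun k _ => by rw [← hnorm k]; ring
    rw [h, horth] at *
    simpa using hσ
  have hmle : ∑ k, (x k - y k)^2 ≤ σ2 := by
    have h : ∑ k, (x k - y k)^2 = ∑ k, ‖v k‖^2 - 2 * ∑ k, x k * y k := by
      rw [Finset.mul_sum, ← Finset.sum_sub_distrib]
      exact Finset.sum_congr rfl fun k _ => by rw [← hnorm k]; ring
    rw [h, horth]
    simpa using hσ
  have hmgfS : mgf (fun θ => ‖S θ‖) μ t ≤ 2 * Real.exp (t^2 * σ2 / 2) := by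
    have h1 : mgf (fun θ => ‖S θ‖) μ t
        ≤ ∫ θ, (Real.cosh (t * Rp θ) + Real.cosh (t * Rm θ)) ∂μ := by
      rw [mgf]
      exact integral_mono hintS ((hintcosh _).add (hintcosh _)) hkey
    have h2 : ∫ θ, (Real.cosh (t * Rp θ) + Real.cosh (t * Rm θ)) ∂μ
        = (∏ k, Real.cosh (t * (x k + y k))) + ∏ k, Real.cosh (t * (x k - y k)) := by
      rw [integral_add (hintcosh _) (hintcosh _), hEcosh, hEcosh]
    linarith [hprodle _ hple, hprodle _ hmle]
  have hexpeq : Real.exp (-t * lam) * (2 * Real.exp (t^2*σ2/2))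
      = 2 * Real.exp (-lam^2/(2*σ2)) := by
    rw [show Real.exp (-t * lam) * (2 * Real.exp (t^2*σ2/2))
        = 2 * (Real.exp (-t * lam) * Real.exp (t^2*σ2/2)) by ring, ← Real.exp_add]
    congr 1
    rw [ht]
    field_simp
    ring
  have hfinal : (μ {θ | lam ≤ ‖S θ‖}).toReal ≤ 2 * Real.exp (-lam^2 / (2*σ2)) := by
    refine hcher.trans ?_
    rw [← hexpeq]
    exact mul_le_mul_of_nonneg_left hmgfS (Real.exp_pos _).le
  calc μ {θ | lam < ‖S θ‖} ≤ μ {θ | lam ≤ ‖S θ‖} := measure_mono (by intro θ h; simp only [Set.mem_setOf_eq] at h ⊢; exact h.le)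
    _ = ENNReal.ofReal ((μ {θ | lam ≤ ‖S θ‖}).toReal) :=
        (ENNReal.ofReal_toReal (measure_ne_top μ _)).symm
    _ ≤ ENNReal.ofReal (2 * Real.exp (-lam^2/(2*σ2))) := ENNReal.ofReal_le_ofReal hfinal

end AuxRadTail

/-- **Lemma (increment tail of the Rademacher process).**
For fixed `τ₁, τ₂ ∈ ℝ` and every `λ ≥ 0`,
`P(|Z'(τ₁) − Z'(τ₂)| > λ) ≤ 2 exp(−λ²/(|A|²M₃²|Ω|²|τ₁−τ₂|²))`. -/
theorem rademacher_process_increment_tail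
    {Θ : Type*} [MeasurableSpace Θ] (μ : Measure Θ) [IsProbabilityMeasure μ]
    (ωmax : ℝ) (hωmax : 0 < ωmax)
    (shat : ℝ → ℂ) (hmeas : Measurable shat)
    (hbd : ∃ C : ℝ, ∀ x : ℝ, ‖shat x‖ ≤ C)
    (hvanish : ∀ x : ℝ, x ∉ Set.Icc (-ωmax) ωmax → shat x = 0)
    (A : ℂ) (hA : A ≠ 0) (τ₀ : ℝ)
    (m : ℕ) (hm : 0 < m)
    (ωs ωs' : Fin m → ℝ)
    (hωs : ∀ k, ωs k ∈ Set.Icc (-ωmax) ωmax)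
    (hωs' : ∀ k, ωs' k ∈ Set.Icc (-ωmax) ωmax)
    (hpos : 0 < ∑ k : Fin m, (‖shat (ωs k)‖ ^ 4 + ‖shat (ωs' k)‖ ^ 4))
    (ε : Fin m → Θ → ℝ) (hεmeas : ∀ k, Measurable (ε k))
    (hindep : iIndepFun ε μ)
    (hrad : ∀ k, μ.map (ε k)
      = (2 : ENNReal)⁻¹ • (Measure.dirac (1 : ℝ) + Measure.dirac (-1 : ℝ)))
    (Z' : ℝ → Θ → ℂ)
    (hZ' : ∀ τ θ, Z' τ θ
      = A * ∑ k : Fin m, (ε k θ : ℂ)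
          * ((‖shat (ωs k)‖ ^ 2 : ℂ) * Complex.exp (Complex.I * (ωs k) * (τ - τ₀))
            - (‖shat (ωs' k)‖ ^ 2 : ℂ) * Complex.exp (Complex.I * (ωs' k) * (τ - τ₀))))
    (M₃ : ℝ)
    (hM₃ : M₃ = Real.sqrt (∑ k : Fin m, (‖shat (ωs k)‖ ^ 4 + ‖shat (ωs' k)‖ ^ 4))) :
    ∀ τ₁ τ₂ : ℝ, ∀ lam : ℝ, 0 ≤ lam →
      μ {θ | lam < ‖Z' τ₁ θ - Z' τ₂ θ‖}
        ≤ ENNReal.ofReal (2 * Real.exp (-(lam ^ 2)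
            / (‖A‖ ^ 2 * M₃ ^ 2 * (2 * ωmax) ^ 2 * |τ₁ - τ₂| ^ 2))) := by
  intro τ₁ τ₂ lam hlam
  by_cases hττ : τ₁ = τ₂
  · subst hττ
    have hempty : {θ | lam < ‖Z' τ₁ θ - Z' τ₁ θ‖} = ∅ := by
      ext θ
      simp only [Set.mem_setOf_eq, sub_self, norm_zero, Set.mem_empty_iff_false, iff_false,
        not_lt]
      exact hlam
    rw [hempty, measure_empty]
    exact zero_le
  · have hd : τ₁ - τ₂ ≠ 0 := sub_ne_zero.2 hττ
    set v : Fin m → ℂ := fun k => A *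
        ((‖shat (ωs k)‖ ^ 2 : ℂ) * (Complex.exp (Complex.I * (ωs k) * (τ₁ - τ₀))
            - Complex.exp (Complex.I * (ωs k) * (τ₂ - τ₀)))
          - (‖shat (ωs' k)‖ ^ 2 : ℂ) * (Complex.exp (Complex.I * (ωs' k) * (τ₁ - τ₀))
            - Complex.exp (Complex.I * (ωs' k) * (τ₂ - τ₀)))) with hvdef
    have heq : ∀ θ, Z' τ₁ θ - Z' τ₂ θ = ∑ k, (ε k θ : ℂ) * v k := by
      intro θ
      rw [hZ' τ₁ θ, hZ' τ₂ θ, Finset.mul_sum, Finset.mul_sum, ← Finset.sum_sub_distrib]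
      refine Finset.sum_congr rfl fun k _ => ?_
      simp only [hvdef]
      ring
    set σ2 : ℝ := 2 * (‖A‖^2 * M₃^2 * ωmax^2 * (τ₁ - τ₂)^2) with hσ2def
    have hM₃pos : 0 < M₃ := hM₃ ▸ Real.sqrt_pos.2 hpos
    have hApos : 0 < ‖A‖ := norm_pos_iff.2 hA
    have hdpos : 0 < (τ₁ - τ₂)^2 := by
      rw [← sq_abs]
      exact pow_pos (abs_pos.2 hd) 2
    have hσpos : 0 < σ2 := by
      rw [hσ2def]
      have h1 : 0 < ‖A‖^2 := pow_pos hApos 2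
      have h2 : 0 < M₃^2 := pow_pos hM₃pos 2
      have h3 : 0 < ωmax^2 := pow_pos hωmax 2
      positivity
    -- norm bounds
    have hβ : ∀ r : ℝ, ‖((‖(r : ℂ)‖ : ℝ) : ℂ)‖ = ‖(r:ℂ)‖ := fun r => by
      simp [Complex.norm_real]
    have hest : ∀ ω : ℝ, ω ∈ Set.Icc (-ωmax) ωmax →
        ‖Complex.exp (Complex.I * (ω:ℂ) * ((τ₁:ℂ) - (τ₀:ℂ)))
          - Complex.exp (Complex.I * (ω:ℂ) * ((τ₂:ℂ) - (τ₀:ℂ)))‖ ≤ ωmax * |τ₁ - τ₂| := by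
      intro ω hω
      have h1 : Complex.I * (ω:ℂ) * ((τ₁:ℂ) - (τ₀:ℂ))
          = Complex.I * ((ω * (τ₁ - τ₀) : ℝ) : ℂ) := by push_cast; ring
      have h2 : Complex.I * (ω:ℂ) * ((τ₂:ℂ) - (τ₀:ℂ))
          = Complex.I * ((ω * (τ₂ - τ₀) : ℝ) : ℂ) := by push_cast; ring
      rw [h1, h2]
      refine (norm_exp_I_sub_exp_I_le _ _).trans ?_
      rw [show ω * (τ₁ - τ₀) - ω * (τ₂ - τ₀) = ω * (τ₁ - τ₂) by ring, abs_mul]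
      have hωb : |ω| ≤ ωmax := abs_le.2 ⟨hω.1, hω.2⟩
      exact mul_le_mul_of_nonneg_right hωb (abs_nonneg _)
    have hσb : ∑ k, ‖v k‖^2 ≤ σ2 := by
      have hvk : ∀ k, ‖v k‖ ≤ ‖A‖ * ((‖shat (ωs k)‖^2 + ‖shat (ωs' k)‖^2)
          * (ωmax * |τ₁ - τ₂|)) := by
        intro k
        simp only [hvdef]
        rw [norm_mul]
        refine mul_le_mul_of_nonneg_left ?_ (norm_nonneg A)
        refine (norm_sub_le _ _).trans ?_
        rw [norm_mul, norm_mul]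
        have hn1 : ‖((‖shat (ωs k)‖:ℝ)^2 : ℂ)‖ = ‖shat (ωs k)‖^2 := by
          simp [Complex.norm_real]
        have hn2 : ‖((‖shat (ωs' k)‖:ℝ)^2 : ℂ)‖ = ‖shat (ωs' k)‖^2 := by
          simp [Complex.norm_real]
        rw [hn1, hn2, add_mul]
        refine add_le_add ?_ ?_
        · exact mul_le_mul_of_nonneg_left (hest _ (hωs k)) (pow_nonneg (norm_nonneg _) 2)
        · exact mul_le_mul_of_nonneg_left (hest _ (hωs' k)) (pow_nonneg (norm_nonneg _) 2)
      have hMsq : ∑ k, (‖shat (ωs k)‖^4 + ‖shat (ωs' k)‖^4) = M₃^2 := by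
        rw [hM₃, Real.sq_sqrt hpos.le]
      calc ∑ k, ‖v k‖^2
          ≤ ∑ k, (‖A‖ * ((‖shat (ωs k)‖^2 + ‖shat (ωs' k)‖^2) * (ωmax * |τ₁ - τ₂|)))^2 :=
            Finset.sum_le_sum fun k _ => pow_le_pow_left₀ (norm_nonneg _) (hvk k) 2
        _ ≤ ∑ k, ‖A‖^2 * (2 * (‖shat (ωs k)‖^4 + ‖shat (ωs' k)‖^4))
              * (ωmax * |τ₁ - τ₂|)^2 := by
            refine Finset.sum_le_sum fun k _ => ?_
            have h2 : (‖shat (ωs k)‖^2 + ‖shat (ωs' k)‖^2)^2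
                ≤ 2 * (‖shat (ωs k)‖^4 + ‖shat (ωs' k)‖^4) := by
              nlinarith [sq_nonneg (‖shat (ωs k)‖^2 - ‖shat (ωs' k)‖^2)]
            have e : (‖A‖ * ((‖shat (ωs k)‖^2 + ‖shat (ωs' k)‖^2) * (ωmax * |τ₁ - τ₂|)))^2
                = ‖A‖^2 * (‖shat (ωs k)‖^2 + ‖shat (ωs' k)‖^2)^2 * (ωmax * |τ₁ - τ₂|)^2 := by
              ring
            rw [e]
            exact mul_le_mul_of_nonneg_right
              (mul_le_mul_of_nonneg_left h2 (sq_nonneg _)) (sq_nonneg _)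
        _ = σ2 := by
            have h3 : ∑ k, ‖A‖^2 * (2 * (‖shat (ωs k)‖^4 + ‖shat (ωs' k)‖^4))
                  * (ωmax * |τ₁ - τ₂|)^2
                = (‖A‖^2 * 2 * (ωmax * |τ₁ - τ₂|)^2)
                  * ∑ k, (‖shat (ωs k)‖^4 + ‖shat (ωs' k)‖^4) := by
              rw [Finset.mul_sum]
              exact Finset.sum_congr rfl fun k _ => by ring
            rw [h3, hMsq, hσ2def, mul_pow, sq_abs]
            ring
    have hres := rademacher_sum_tail μ ε hεmeas hindep hrad v hσpos hσb hlam
    have hset : {θ | lam < ‖Z' τ₁ θ - Z' τ₂ θ‖} = {θ | lam < ‖∑ k, (ε k θ : ℂ) * v k‖} := by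
      ext θ
      rw [Set.mem_setOf_eq, Set.mem_setOf_eq, heq θ]
    have hexp : -lam^2/(2*σ2)
        = -(lam^2) / (‖A‖^2 * M₃^2 * (2*ωmax)^2 * |τ₁-τ₂|^2) := by
      rw [hσ2def, sq_abs]
      ring
    rw [hset, ← hexp]
    exact hres

end
end

section
/- For every fixed τ ∈ ℝ, the estimator satisfies E[ |R̃_ss(τ) − A·R_ss(τ−τ₀)|² ] ≤ (η²/m)·( μ₁² − 4π²·|R_ss(τ−τ₀)|²/‖ŝ‖₂⁴ ) ≤ η²·μ₁²/m, and consequently E[ |R̃_ss(τ) − A·R_ss(τ−τ₀)| ] ≤ η·μ₁/√m. -/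
open MeasureTheory ProbabilityTheory Real Set

noncomputable section



lemma integrable_of_bdd' {Θ : Type*} [MeasurableSpace Θ] {μ : Measure Θ} [IsFiniteMeasure μ]
    {E : Type*} [NormedAddCommGroup E] {g : Θ → E} (hg : AEStronglyMeasurable g μ)
    (C : ℝ) (h : ∀ θ, ‖g θ‖ ≤ C) : Integrable g μ :=
  (integrable_const C).mono' hg (Filter.Eventually.of_forall h)

lemma sum_sq_indep {Θ : Type*} [MeasurableSpace Θ] (μ : Measure Θ) [IsProbabilityMeasure μ]
    {m : ℕ} (W : Fin m → Θ → ℝ) (hWmeas : ∀ k, Measurable (W k))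
    (C : ℝ) (hbd : ∀ k θ, ‖W k θ‖ ≤ C)
    (hzero : ∀ k, ∫ θ, W k θ ∂μ = 0)
    (hind : ∀ j k, j ≠ k → IndepFun (W j) (W k) μ) :
    ∫ θ, (∑ k, W k θ) ^ 2 ∂μ = ∑ k, ∫ θ, (W k θ) ^ 2 ∂μ := by
  have hint : ∀ j k : Fin m, Integrable (fun θ => W j θ * W k θ) μ := by
    intro j k
    refine integrable_of_bdd' (((hWmeas j).mul (hWmeas k)).aestronglyMeasurable) (C * C) ?_
    intro θ
    calc ‖W j θ * W k θ‖ = ‖W j θ‖ * ‖W k θ‖ := norm_mul _ _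
      _ ≤ C * C := by
          have h0 : (0:ℝ) ≤ C := le_trans (norm_nonneg _) (hbd j θ)
          exact mul_le_mul (hbd j θ) (hbd k θ) (norm_nonneg _) h0
  have expand : ∀ θ, (∑ k, W k θ) ^ 2 = ∑ j : Fin m, ∑ k : Fin m, W j θ * W k θ := by
    intro θ; rw [sq, Finset.sum_mul_sum]
  calc ∫ θ, (∑ k, W k θ) ^ 2 ∂μ
      = ∫ θ, ∑ j : Fin m, ∑ k : Fin m, W j θ * W k θ ∂μ := by
        exact integral_congr_ae (Filter.Eventually.of_forall (fun θ => expand θ))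
    _ = ∑ j : Fin m, ∫ θ, ∑ k : Fin m, W j θ * W k θ ∂μ := by
        exact integral_finset_sum _ (fun j _ => integrable_finset_sum _ (fun k _ => hint j k))
    _ = ∑ j : Fin m, ∑ k : Fin m, ∫ θ, W j θ * W k θ ∂μ := by
        exact Finset.sum_congr rfl (fun j _ => integral_finset_sum _ (fun k _ => hint j k))
    _ = ∑ k, ∫ θ, (W k θ) ^ 2 ∂μ := by
        refine Finset.sum_congr rfl (fun j _ => ?_)
        rw [Finset.sum_eq_single j]
        · simp [sq]
        · intro k _ hkj
          have hjk : IndepFun (W j) (W k) μ := hind j k (fun h => hkj h.symm)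
          rw [hjk.integral_fun_mul_eq_mul_integral (hWmeas j).aestronglyMeasurable (hWmeas k).aestronglyMeasurable,
            hzero j, zero_mul]
        · intro h; exact absurd (Finset.mem_univ j) h

set_option maxHeartbeats 2000000 in
/-- **Pointwise variance/deviation bound for the estimator.**
For every fixed `τ ∈ ℝ`:
`E[|R̃_ss(τ) − A R_ss(τ−τ₀)|²] ≤ (η²/m)(μ₁² − 4π²|R_ss(τ−τ₀)|²/‖ŝ‖₂⁴) ≤ η²μ₁²/m`,
and consequently `E[|R̃_ss(τ) − A R_ss(τ−τ₀)|] ≤ ημ₁/√m`. -/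
theorem pointwise_variance_bound
    {Θ : Type*} [MeasurableSpace Θ] (μ : Measure Θ) [IsProbabilityMeasure μ]
    (ωmax : ℝ) (hωmax : 0 < ωmax)
    (shat : ℝ → ℂ) (hmeas : Measurable shat)
    (hbd : ∃ C : ℝ, ∀ x : ℝ, ‖shat x‖ ≤ C)
    (hvanish : ∀ x : ℝ, x ∉ Set.Icc (-ωmax) ωmax → shat x = 0)
    (m : ℕ) (hm : 0 < m)
    (ω : Fin m → Θ → ℝ) (hωmeas : ∀ k, Measurable (ω k))
    (hindep : iIndepFun ω μ)
    (hunif : ∀ k, μ.map (ω k)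
      = (ENNReal.ofReal (2 * ωmax))⁻¹ • volume.restrict (Set.Icc (-ωmax) ωmax))
    (A : ℂ) (hA : A ≠ 0) (τ₀ : ℝ)
    (Rss : ℝ → ℂ)
    (hRss : ∀ τ : ℝ, Rss τ
      = (1 / (2 * π)) * ∫ w in Set.Icc (-ωmax) ωmax,
          (‖shat w‖ ^ 2 : ℂ) * Complex.exp (Complex.I * w * τ))
    (Rt : ℝ → Θ → ℂ)
    (hRt : ∀ τ θ, Rt τ θ
      = ((2 * ωmax) / (2 * π * m))
        * (A * ∑ k : Fin m, (‖shat (ω k θ)‖ ^ 2 : ℂ)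
            * Complex.exp (Complex.I * (ω k θ) * (τ - τ₀))))
    (nrm2 nrm4 : ℝ) (h2pos : 0 < nrm2)
    (h2 : nrm2 ^ 2 = ∫ w in Set.Icc (-ωmax) ωmax, ‖shat w‖ ^ 2)
    (h4 : nrm4 ^ 4 = ∫ w in Set.Icc (-ωmax) ωmax, ‖shat w‖ ^ 4)
    (η μ₁ : ℝ)
    (hη : η = ‖A‖ * nrm2 ^ 2 / (2 * π))
    (hμ₁ : μ₁ = Real.sqrt (2 * ωmax) * nrm4 ^ 2 / nrm2 ^ 2) :
    ∀ τ : ℝ,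
      (∫ θ, ‖Rt τ θ - A * Rss (τ - τ₀)‖ ^ 2 ∂μ
        ≤ η ^ 2 / m * (μ₁ ^ 2 - 4 * π ^ 2 * ‖Rss (τ - τ₀)‖ ^ 2 / nrm2 ^ 4))
      ∧ (η ^ 2 / m * (μ₁ ^ 2 - 4 * π ^ 2 * ‖Rss (τ - τ₀)‖ ^ 2 / nrm2 ^ 4)
        ≤ η ^ 2 * μ₁ ^ 2 / m)
      ∧ (∫ θ, ‖Rt τ θ - A * Rss (τ - τ₀)‖ ∂μ ≤ η * μ₁ / Real.sqrt m) := by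
  intro τ
  obtain ⟨C, hC⟩ := hbd
  have hC0 : (0:ℝ) ≤ C := le_trans (norm_nonneg _) (hC 0)
  have hπ : (0:ℝ) < π := Real.pi_pos
  have hmR : (0:ℝ) < (m:ℝ) := by exact_mod_cast hm
  set t : ℝ := τ - τ₀ with ht
  set f : ℝ → ℂ := fun w => (‖shat w‖ ^ 2 : ℂ) * Complex.exp (Complex.I * w * t) with hf
  have hfmeas : Measurable f := by
    have h1 : Measurable fun w : ℝ => ((‖shat w‖ : ℂ)) := Complex.measurable_ofReal.comp hmeas.norm
    have h2 : Measurable fun w : ℝ => Complex.exp (Complex.I * w * t) :=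
      Complex.measurable_exp.comp ((Complex.measurable_ofReal.const_mul Complex.I).mul_const _)
    exact (h1.pow_const 2).mul h2
  have hfnorm : ∀ w, ‖f w‖ = ‖shat w‖ ^ 2 := by
    intro w
    rw [hf]
    simp only [norm_mul, norm_pow, Complex.norm_real, Real.norm_eq_abs, abs_norm,
      Complex.norm_exp, _root_.abs_abs, sq_abs]
    have : (Complex.I * w * t).re = 0 := by simp
    rw [this, Real.exp_zero, mul_one]
  -- transfer of integrals along the uniform law
  have hkeyC : ∀ (k : Fin m) (F : ℝ → ℂ), Measurable F →
      ∫ θ, F (ω k θ) ∂μ = (2*ωmax)⁻¹ • ∫ w in Set.Icc (-ωmax) ωmax, F w := by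
    intro k F hF
    rw [← integral_map (hωmeas k).aemeasurable hF.aestronglyMeasurable, hunif k,
      integral_smul_measure]
    congr 1
    rw [ENNReal.toReal_inv, ENNReal.toReal_ofReal (by positivity : (0:ℝ) ≤ 2*ωmax)]
  have hkeyR : ∀ (k : Fin m) (F : ℝ → ℝ), Measurable F →
      ∫ θ, F (ω k θ) ∂μ = (2*ωmax)⁻¹ • ∫ w in Set.Icc (-ωmax) ωmax, F w := by
    intro k F hF
    rw [← integral_map (hωmeas k).aemeasurable hF.aestronglyMeasurable, hunif k,
      integral_smul_measure]
    congr 1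
    rw [ENNReal.toReal_inv, ENNReal.toReal_ofReal (by positivity : (0:ℝ) ≤ 2*ωmax)]
  set Sf : ℂ := ∫ w in Set.Icc (-ωmax) ωmax, f w with hSf
  have h2ωc : ((2*ωmax : ℝ) : ℂ) ≠ 0 := by
    simp only [ne_eq, Complex.ofReal_eq_zero]; positivity
  have hπc : ((π : ℝ) : ℂ) ≠ 0 := by
    simp only [ne_eq, Complex.ofReal_eq_zero]; exact Real.pi_ne_zero
  have hmc : ((m : ℝ) : ℂ) ≠ 0 := by
    simp only [ne_eq, Complex.ofReal_eq_zero]; positivity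
  have hkeyC : ∀ (k : Fin m) (F : ℝ → ℂ), Measurable F →
      ∫ θ, F (ω k θ) ∂μ = (2*ωmax)⁻¹ • ∫ w in Set.Icc (-ωmax) ωmax, F w := by
    intro k F hF
    rw [← integral_map (hωmeas k).aemeasurable hF.aestronglyMeasurable, hunif k,
      integral_smul_measure]
    congr 1
    rw [ENNReal.toReal_inv, ENNReal.toReal_ofReal (by positivity : (0:ℝ) ≤ 2*ωmax)]
  have hkeyR : ∀ (k : Fin m) (F : ℝ → ℝ), Measurable F →
      ∫ θ, F (ω k θ) ∂μ = (2*ωmax)⁻¹ • ∫ w in Set.Icc (-ωmax) ωmax, F w := by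
    intro k F hF
    rw [← integral_map (hωmeas k).aemeasurable hF.aestronglyMeasurable, hunif k,
      integral_smul_measure]
    congr 1
    rw [ENNReal.toReal_inv, ENNReal.toReal_ofReal (by positivity : (0:ℝ) ≤ 2*ωmax)]
  have hωc : ((ωmax : ℝ) : ℂ) ≠ 0 := by
    simp only [ne_eq, Complex.ofReal_eq_zero]; positivity
  have hIf : Sf = ((2*π : ℝ) : ℂ) * Rss t := by
    have h : Rss t = 1/(2*(π:ℂ)) * Sf := hRss t
    rw [h]
    field_simp
    push_cast; ring
  set EY : ℂ := (2*ωmax)⁻¹ • Sf with hEYdef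
  set g : Fin m → Θ → ℂ := fun k θ => f (ω k θ) with hgdef
  have hgmeas : ∀ k, Measurable (g k) := fun k => hfmeas.comp (hωmeas k)
  have hfbd : ∀ w, ‖f w‖ ≤ C^2 := by
    intro w; rw [hfnorm w]
    exact pow_le_pow_left₀ (norm_nonneg _) (hC w) 2
  have hgbd : ∀ k θ, ‖g k θ‖ ≤ C^2 := fun k θ => hfbd _
  have hgint : ∀ k, Integrable (g k) μ :=
    fun k => integrable_of_bdd' (hgmeas k).aestronglyMeasurable _ (hgbd k)
  have hEg : ∀ k, ∫ θ, g k θ ∂μ = EY := fun k => hkeyC k f hfmeas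
  have hEg2 : ∀ k, ∫ θ, ‖g k θ‖^2 ∂μ = nrm4^4 / (2*ωmax) := by
    intro k
    have e1 : ∫ θ, ‖g k θ‖^2 ∂μ
        = (2*ωmax)⁻¹ • ∫ w in Set.Icc (-ωmax) ωmax, ‖f w‖^2 :=
      hkeyR k (fun w => ‖f w‖^2) ((hfmeas.norm).pow_const 2)
    have e2 : ∫ w in Set.Icc (-ωmax) ωmax, ‖f w‖^2
        = ∫ w in Set.Icc (-ωmax) ωmax, ‖shat w‖^4 := by
      refine integral_congr_ae (Filter.Eventually.of_forall (fun w => ?_))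
      show ‖f w‖^2 = ‖shat w‖^4
      rw [hfnorm w]; ring
    rw [e1, e2, ← h4, smul_eq_mul]
    ring
  -- centered real and imaginary parts
  set U : Fin m → Θ → ℝ := fun k θ => (g k θ).re - EY.re with hUdef
  set V : Fin m → Θ → ℝ := fun k θ => (g k θ).im - EY.im with hVdef
  have hUmeas : ∀ k, Measurable (U k) :=
    fun k => (Complex.measurable_re.comp (hgmeas k)).sub measurable_const
  have hVmeas : ∀ k, Measurable (V k) :=
    fun k => (Complex.measurable_im.comp (hgmeas k)).sub measurable_const
  have hUbd : ∀ k θ, ‖U k θ‖ ≤ C^2 + ‖EY‖ := by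
    intro k θ
    calc ‖U k θ‖ ≤ ‖(g k θ).re‖ + ‖EY.re‖ := norm_sub_le _ _
      _ ≤ C^2 + ‖EY‖ := add_le_add
          (le_trans (Complex.abs_re_le_norm _) (hgbd k θ))
          (Complex.abs_re_le_norm _)
  have hVbd : ∀ k θ, ‖V k θ‖ ≤ C^2 + ‖EY‖ := by
    intro k θ
    calc ‖V k θ‖ ≤ ‖(g k θ).im‖ + ‖EY.im‖ := norm_sub_le _ _
      _ ≤ C^2 + ‖EY‖ := add_le_add
          (le_trans (Complex.abs_im_le_norm _) (hgbd k θ))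
          (Complex.abs_im_le_norm _)
  have hgre : ∀ k, ∫ θ, (g k θ).re ∂μ = EY.re := by
    intro k
    have := Complex.reCLM.integral_comp_comm (hgint k)
    simpa [hEg k] using this
  have hgim : ∀ k, ∫ θ, (g k θ).im ∂μ = EY.im := by
    intro k
    have := Complex.imCLM.integral_comp_comm (hgint k)
    simpa [hEg k] using this
  have hU0 : ∀ k, ∫ θ, U k θ ∂μ = 0 := by
    intro k
    show ∫ θ, ((g k θ).re - EY.re) ∂μ = 0
    have hire : Integrable (fun θ => (g k θ).re) μ := (hgint k).re
    rw [integral_sub hire (integrable_const _), hgre k, integral_const]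
    simp
  have hV0 : ∀ k, ∫ θ, V k θ ∂μ = 0 := by
    intro k
    show ∫ θ, ((g k θ).im - EY.im) ∂μ = 0
    have hiim : Integrable (fun θ => (g k θ).im) μ := (hgint k).im
    rw [integral_sub hiim (integrable_const _), hgim k, integral_const]
    simp
  have hUind : ∀ j k, j ≠ k → IndepFun (U j) (U k) μ := by
    intro j k hjk
    have hφ : Measurable (fun w : ℝ => (f w).re - EY.re) :=
      (Complex.measurable_re.comp hfmeas).sub measurable_const
    exact (hindep.indepFun hjk).comp hφ hφ
  have hVind : ∀ j k, j ≠ k → IndepFun (V j) (V k) μ := by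
    intro j k hjk
    have hφ : Measurable (fun w : ℝ => (f w).im - EY.im) :=
      (Complex.measurable_im.comp hfmeas).sub measurable_const
    exact (hindep.indepFun hjk).comp hφ hφ
  have hsumU := sum_sq_indep μ U hUmeas (C^2 + ‖EY‖) hUbd hU0 hUind
  have hsumV := sum_sq_indep μ V hVmeas (C^2 + ‖EY‖) hVbd hV0 hVind
  have hnz : ∀ z : ℂ, ‖z‖^2 = z.re^2 + z.im^2 := by
    intro z
    rw [Complex.sq_norm, Complex.normSq_apply]; ring
  have hiU2 : ∀ k, Integrable (fun θ => (U k θ)^2) μ := by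
    intro k
    refine integrable_of_bdd' (((hUmeas k).pow_const 2).aestronglyMeasurable)
      ((C^2 + ‖EY‖)^2) ?_
    intro θ
    rw [Real.norm_eq_abs, abs_of_nonneg (sq_nonneg _), ← sq_abs]
    exact pow_le_pow_left₀ (abs_nonneg _) ((Real.norm_eq_abs _) ▸ hUbd k θ) 2
  have hiV2 : ∀ k, Integrable (fun θ => (V k θ)^2) μ := by
    intro k
    refine integrable_of_bdd' (((hVmeas k).pow_const 2).aestronglyMeasurable)
      ((C^2 + ‖EY‖)^2) ?_
    intro θ
    rw [Real.norm_eq_abs, abs_of_nonneg (sq_nonneg _), ← sq_abs]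
    exact pow_le_pow_left₀ (abs_nonneg _) ((Real.norm_eq_abs _) ▸ hVbd k θ) 2
  have hvar : ∀ k, (∫ θ, (U k θ)^2 ∂μ) + (∫ θ, (V k θ)^2 ∂μ)
      = nrm4^4/(2*ωmax) - ‖EY‖^2 := by
    intro k
    have hign : Integrable (fun θ => ‖g k θ‖^2) μ := by
      refine integrable_of_bdd' (((hgmeas k).norm.pow_const 2).aestronglyMeasurable)
        ((C^2)^2) ?_
      intro θ
      rw [Real.norm_eq_abs, abs_of_nonneg (sq_nonneg _)]
      exact pow_le_pow_left₀ (norm_nonneg _) (hgbd k θ) 2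
    have hire : Integrable (fun θ => (g k θ).re) μ := (hgint k).re
    have hiim : Integrable (fun θ => (g k θ).im) μ := (hgint k).im
    have e2 : ∀ θ, (U k θ)^2 + (V k θ)^2
        = ‖g k θ‖^2 - (2*EY.re*(g k θ).re + 2*EY.im*(g k θ).im) + ‖EY‖^2 := by
      intro θ
      show ((g k θ).re - EY.re)^2 + ((g k θ).im - EY.im)^2 = _
      rw [hnz (g k θ), hnz EY]; ring
    have i3 : Integrable (fun θ => 2*EY.re*(g k θ).re) μ := hire.const_mul _
    have i4 : Integrable (fun θ => 2*EY.im*(g k θ).im) μ := hiim.const_mul _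
    have i1 : Integrable (fun θ => 2*EY.re*(g k θ).re + 2*EY.im*(g k θ).im) μ := i3.add i4
    have i2 : Integrable
        (fun θ => ‖g k θ‖^2 - (2*EY.re*(g k θ).re + 2*EY.im*(g k θ).im)) μ := hign.sub i1
    have eint : ∫ θ, ((U k θ)^2 + (V k θ)^2) ∂μ = nrm4^4/(2*ωmax) - ‖EY‖^2 := by
      calc ∫ θ, ((U k θ)^2 + (V k θ)^2) ∂μ
          = ∫ θ, (‖g k θ‖^2 - (2*EY.re*(g k θ).re + 2*EY.im*(g k θ).im) + ‖EY‖^2) ∂μ :=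
            integral_congr_ae (Filter.Eventually.of_forall (fun θ => e2 θ))
        _ = (∫ θ, ‖g k θ‖^2 ∂μ)
              - (∫ θ, (2*EY.re*(g k θ).re + 2*EY.im*(g k θ).im) ∂μ) + ‖EY‖^2 := by
            rw [integral_add i2 (integrable_const _), integral_sub hign i1,
              integral_const, probReal_univ, one_smul]
        _ = nrm4^4/(2*ωmax) - 2*‖EY‖^2 + ‖EY‖^2 := by
            rw [hEg2 k, integral_add i3 i4,
              integral_const_mul, integral_const_mul, hgre k, hgim k, hnz EY]
            ring
        _ = nrm4^4/(2*ωmax) - ‖EY‖^2 := by ring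
    rw [← integral_add (hiU2 k) (hiV2 k)]
    exact eint
  -- the sum
  have hre : ∀ θ, (∑ k, (g k θ - EY)).re = ∑ k, U k θ := by
    intro θ
    rw [Complex.re_sum]
    exact Finset.sum_congr rfl (fun k _ => by rw [Complex.sub_re])
  have him : ∀ θ, (∑ k, (g k θ - EY)).im = ∑ k, V k θ := by
    intro θ
    rw [Complex.im_sum]
    exact Finset.sum_congr rfl (fun k _ => by rw [Complex.sub_im])
  have hptsum : ∀ θ, ‖∑ k, (g k θ - EY)‖^2 = (∑ k, U k θ)^2 + (∑ k, V k θ)^2 := by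
    intro θ
    rw [hnz, hre θ, him θ]
  have hiSU : Integrable (fun θ => (∑ k, U k θ)^2) μ := by
    refine integrable_of_bdd'
      (((Finset.measurable_sum Finset.univ (fun k _ => hUmeas k)).pow_const 2).aestronglyMeasurable)
      ((m*(C^2 + ‖EY‖))^2) ?_
    intro θ
    rw [Real.norm_eq_abs, abs_of_nonneg (sq_nonneg _), ← sq_abs]
    refine pow_le_pow_left₀ (abs_nonneg _) ?_ 2
    calc |∑ k, U k θ| ≤ ∑ k, |U k θ| := Finset.abs_sum_le_sum_abs _ _
      _ ≤ ∑ k : Fin m, (C^2 + ‖EY‖) :=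
          Finset.sum_le_sum (fun k _ => (Real.norm_eq_abs _) ▸ hUbd k θ)
      _ = m*(C^2 + ‖EY‖) := by
          rw [Finset.sum_const, Finset.card_univ, Fintype.card_fin, nsmul_eq_mul]
  have hiSV : Integrable (fun θ => (∑ k, V k θ)^2) μ := by
    refine integrable_of_bdd'
      (((Finset.measurable_sum Finset.univ (fun k _ => hVmeas k)).pow_const 2).aestronglyMeasurable)
      ((m*(C^2 + ‖EY‖))^2) ?_
    intro θ
    rw [Real.norm_eq_abs, abs_of_nonneg (sq_nonneg _), ← sq_abs]
    refine pow_le_pow_left₀ (abs_nonneg _) ?_ 2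
    calc |∑ k, V k θ| ≤ ∑ k, |V k θ| := Finset.abs_sum_le_sum_abs _ _
      _ ≤ ∑ k : Fin m, (C^2 + ‖EY‖) :=
          Finset.sum_le_sum (fun k _ => (Real.norm_eq_abs _) ▸ hVbd k θ)
      _ = m*(C^2 + ‖EY‖) := by
          rw [Finset.sum_const, Finset.card_univ, Fintype.card_fin, nsmul_eq_mul]
  have htot : ∫ θ, ‖∑ k, (g k θ - EY)‖^2 ∂μ = m * (nrm4^4/(2*ωmax) - ‖EY‖^2) := by
    calc ∫ θ, ‖∑ k, (g k θ - EY)‖^2 ∂μ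
        = ∫ θ, ((∑ k, U k θ)^2 + (∑ k, V k θ)^2) ∂μ :=
          integral_congr_ae (Filter.Eventually.of_forall (fun θ => hptsum θ))
      _ = (∫ θ, (∑ k, U k θ)^2 ∂μ) + (∫ θ, (∑ k, V k θ)^2 ∂μ) := integral_add hiSU hiSV
      _ = ∑ k, ((∫ θ, (U k θ)^2 ∂μ) + (∫ θ, (V k θ)^2 ∂μ)) := by
          rw [hsumU, hsumV, Finset.sum_add_distrib]
      _ = ∑ k : Fin m, (nrm4^4/(2*ωmax) - ‖EY‖^2) :=
          Finset.sum_congr rfl (fun k _ => hvar k)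
      _ = m * (nrm4^4/(2*ωmax) - ‖EY‖^2) := by
          rw [Finset.sum_const, Finset.card_univ, Fintype.card_fin, nsmul_eq_mul]
  set c : ℝ := (2*ωmax)/(2*π*m) with hcdef
  have hc : 0 < c := by rw [hcdef]; positivity
  have hcm : (c:ℂ) * m * EY = Rss t := by
    rw [hcdef, hEYdef, Complex.real_smul, hIf]
    push_cast
    have h1 : ((2:ℂ)*(ωmax:ℂ)) ≠ 0 := mul_ne_zero two_ne_zero hωc
    have h2 : ((2:ℂ)*(π:ℂ)*(m:ℂ)) ≠ 0 := mul_ne_zero (mul_ne_zero two_ne_zero hπc) hmc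
    rw [show (2*(ωmax:ℂ))/(2*(π:ℂ)*(m:ℂ)) * (m:ℂ) * ((2*(ωmax:ℂ))⁻¹ * (2*(π:ℂ) * Rss t))
        = Rss t * ((2*(ωmax:ℂ)) * (2*(ωmax:ℂ))⁻¹) * ((2*(π:ℂ)*(m:ℂ))⁻¹ * (2*(π:ℂ)*(m:ℂ)))
        from by ring,
      mul_inv_cancel₀ h1, inv_mul_cancel₀ h2, mul_one, mul_one]
  have hcc : (c:ℂ) = 2*(ωmax:ℂ)/(2*(π:ℂ)*(m:ℂ)) := by
    rw [hcdef]; push_cast; ring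
  have hZeq : ∀ θ, Rt τ θ - A * Rss t = c • (A * ∑ k, (g k θ - EY)) := by
    intro θ
    have hsum : (∑ k : Fin m, (‖shat (ω k θ)‖^2 : ℂ)
          * Complex.exp (Complex.I * (ω k θ) * ((τ:ℂ) - (τ₀:ℂ))))
        = ∑ k, g k θ := by
      refine Finset.sum_congr rfl (fun k _ => ?_)
      show _ = f (ω k θ)
      rw [hf]
      push_cast [ht]
      ring_nf
    rw [hRt τ θ, hsum, Complex.real_smul]
    have hdist : ∑ k, (g k θ - EY) = (∑ k, g k θ) - (m:ℂ) * EY := by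
      rw [Finset.sum_sub_distrib, Finset.sum_const, Finset.card_univ, Fintype.card_fin,
        nsmul_eq_mul]
    rw [hdist]
    linear_combination A * hcm - (A * ∑ k, g k θ) * hcc
  have hZnormsq : ∀ θ, ‖Rt τ θ - A * Rss t‖^2 = c^2*‖A‖^2 * ‖∑ k, (g k θ - EY)‖^2 := by
    intro θ
    rw [hZeq θ, norm_smul, Real.norm_eq_abs, abs_of_pos hc, norm_mul]
    ring
  have hI2 : ∫ θ, ‖Rt τ θ - A * Rss t‖^2 ∂μ
      = c^2*‖A‖^2 * (m * (nrm4^4/(2*ωmax) - ‖EY‖^2)) := by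
    calc ∫ θ, ‖Rt τ θ - A * Rss t‖^2 ∂μ
        = ∫ θ, c^2*‖A‖^2 * ‖∑ k, (g k θ - EY)‖^2 ∂μ :=
          integral_congr_ae (Filter.Eventually.of_forall (fun θ => hZnormsq θ))
      _ = c^2*‖A‖^2 * ∫ θ, ‖∑ k, (g k θ - EY)‖^2 ∂μ := integral_const_mul _ _
      _ = c^2*‖A‖^2 * (m * (nrm4^4/(2*ωmax) - ‖EY‖^2)) := by rw [htot]
  have hEYsq : ‖EY‖^2 = (2*π)^2*‖Rss t‖^2/(2*ωmax)^2 := by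
    rw [hEYdef, norm_smul, hIf, norm_mul, Complex.norm_real, Real.norm_eq_abs, Real.norm_eq_abs,
      abs_of_pos (by positivity : (0:ℝ) < 2*π), abs_of_pos (by positivity : (0:ℝ) < (2*ωmax)⁻¹)]
    field_simp
  have hmain : c^2*‖A‖^2 * (m * (nrm4^4/(2*ωmax) - ‖EY‖^2))
      = η^2/m * (μ₁^2 - 4*π^2*‖Rss t‖^2/nrm2^4) := by
    rw [hEYsq, hη, hμ₁, hcdef]
    simp only [div_pow, mul_pow]
    rw [Real.sq_sqrt (by positivity : (0:ℝ) ≤ 2*ωmax)]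
    have hπ0 : π ≠ 0 := Real.pi_ne_zero
    have hm0 : (m:ℝ) ≠ 0 := ne_of_gt hmR
    have hω0 : (2*ωmax) ≠ 0 := by positivity
    have hn0 : nrm2 ≠ 0 := ne_of_gt h2pos
    field_simp
    ring
  have hfirst : ∫ θ, ‖Rt τ θ - A * Rss t‖^2 ∂μ
      = η^2/m * (μ₁^2 - 4*π^2*‖Rss t‖^2/nrm2^4) := hI2.trans hmain
  have hsecond : η^2/m * (μ₁^2 - 4*π^2*‖Rss t‖^2/nrm2^4) ≤ η^2*μ₁^2/m := by
    have hx : 0 ≤ 4*π^2*‖Rss t‖^2/nrm2^4 := by positivity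
    have hc2 : 0 ≤ η^2/(m:ℝ) := by positivity
    calc η^2/(m:ℝ) * (μ₁^2 - 4*π^2*‖Rss t‖^2/nrm2^4) ≤ η^2/(m:ℝ) * μ₁^2 :=
        mul_le_mul_of_nonneg_left (sub_le_self _ hx) hc2
      _ = η^2*μ₁^2/m := by ring
  refine ⟨le_of_eq hfirst, hsecond, ?_⟩
  -- third part via Cauchy–Schwarz
  have hZbd : ∀ θ, ‖Rt τ θ - A * Rss t‖ ≤ c*‖A‖*(m*(C^2+‖EY‖)) := by
    intro θ
    rw [hZeq θ, norm_smul, Real.norm_eq_abs, abs_of_pos hc, norm_mul, ← mul_assoc]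
    refine mul_le_mul_of_nonneg_left ?_ (mul_nonneg hc.le (norm_nonneg A))
    calc ‖∑ k, (g k θ - EY)‖ ≤ ∑ k, ‖g k θ - EY‖ := norm_sum_le _ _
      _ ≤ ∑ k : Fin m, (C^2+‖EY‖) :=
          Finset.sum_le_sum (fun k _ => (norm_sub_le _ _).trans
            (add_le_add (hgbd k θ) le_rfl))
      _ = m*(C^2+‖EY‖) := by
          rw [Finset.sum_const, Finset.card_univ, Fintype.card_fin, nsmul_eq_mul]
  have hZm' : Measurable (fun θ => Rt τ θ - A * Rss t) := by
    have he : (fun θ => Rt τ θ - A * Rss t)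
        = fun θ => c • (A * ∑ k, (g k θ - EY)) := funext hZeq
    rw [he]
    exact (((Finset.measurable_sum Finset.univ
      (fun k _ => (hgmeas k).sub measurable_const)).const_mul A).const_smul c)
  set D := c*‖A‖*(m*(C^2+‖EY‖)) with hD
  have hiZ1 : Integrable (fun θ => ‖Rt τ θ - A * Rss t‖) μ :=
    integrable_of_bdd' hZm'.norm.aestronglyMeasurable D
      (fun θ => by rw [norm_norm]; exact hZbd θ)
  have hiZ2 : Integrable (fun θ => ‖Rt τ θ - A * Rss t‖^2) μ := by
    refine integrable_of_bdd' ((hZm'.norm.pow_const 2).aestronglyMeasurable) (D^2) ?_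
    intro θ
    rw [Real.norm_eq_abs, abs_of_nonneg (sq_nonneg _)]
    exact pow_le_pow_left₀ (norm_nonneg _) (hZbd θ) 2
  set I1 := ∫ θ, ‖Rt τ θ - A * Rss t‖ ∂μ with hI1def
  have hI10 : 0 ≤ I1 := integral_nonneg (fun θ => norm_nonneg _)
  have hCS : I1^2 ≤ ∫ θ, ‖Rt τ θ - A * Rss t‖^2 ∂μ := by
    have h0 : 0 ≤ ∫ θ, (‖Rt τ θ - A * Rss t‖ - I1)^2 ∂μ :=
      integral_nonneg (fun θ => sq_nonneg _)
    have hexp : ∫ θ, (‖Rt τ θ - A * Rss t‖ - I1)^2 ∂μ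
        = (∫ θ, ‖Rt τ θ - A * Rss t‖^2 ∂μ) - I1^2 := by
      have hpt : ∀ θ, (‖Rt τ θ - A * Rss t‖ - I1)^2
          = ‖Rt τ θ - A * Rss t‖^2 - (2*I1)*‖Rt τ θ - A * Rss t‖ + I1^2 :=
        fun θ => by ring
      calc ∫ θ, (‖Rt τ θ - A * Rss t‖ - I1)^2 ∂μ
          = ∫ θ, (‖Rt τ θ - A * Rss t‖^2 - (2*I1)*‖Rt τ θ - A * Rss t‖ + I1^2) ∂μ :=
            integral_congr_ae (Filter.Eventually.of_forall hpt)
        _ = (∫ θ, ‖Rt τ θ - A * Rss t‖^2 ∂μ)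
              - (2*I1)*(∫ θ, ‖Rt τ θ - A * Rss t‖ ∂μ) + I1^2 := by
            have j1 : Integrable (fun θ => (2*I1)*‖Rt τ θ - A * Rss t‖) μ :=
              hiZ1.const_mul _
            have j2 : Integrable
                (fun θ => ‖Rt τ θ - A * Rss t‖^2 - (2*I1)*‖Rt τ θ - A * Rss t‖) μ :=
              hiZ2.sub j1
            rw [integral_add j2 (integrable_const _), integral_sub hiZ2 j1,
              integral_const_mul, integral_const,
              probReal_univ, one_smul]
        _ = (∫ θ, ‖Rt τ θ - A * Rss t‖^2 ∂μ) - I1^2 := by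
            rw [← hI1def]; ring
    linarith
  have hI2le : ∫ θ, ‖Rt τ θ - A * Rss t‖^2 ∂μ ≤ η^2*μ₁^2/m :=
    (le_of_eq hfirst).trans hsecond
  have hηpos : 0 ≤ η := by rw [hη]; positivity
  have hμpos : 0 ≤ μ₁ := by rw [hμ₁]; positivity
  have hB2 : (η*μ₁/Real.sqrt m)^2 = η^2*μ₁^2/m := by
    rw [div_pow, mul_pow, Real.sq_sqrt (by positivity : (0:ℝ) ≤ (m:ℝ))]
  have hBpos : 0 ≤ η*μ₁/Real.sqrt m := by positivity
  nlinarith [hCS, hI2le, hB2, hI10, hBpos]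

end
end

section
/- Suppose |Ω||T| ≥ 3. Then the Rademacher process satisfies E[ sup_{τ∈T} |Z'(τ)| ] ≤ |A|·M₃·( 3·√(log(2|Ω||T|)) + 1.61 ). -/
open MeasureTheory ProbabilityTheory Real Set

noncomputable section

namespace RPE

lemma rad_int {Θ : Type*} [MeasurableSpace Θ] (μ : Measure Θ)
    (X : Θ → ℝ) (hX : Measurable X)
    (h : μ.map X = (2 : ENNReal)⁻¹ • (Measure.dirac (1 : ℝ) + Measure.dirac (-1 : ℝ)))
    (f : ℝ → ℝ) (hf : Measurable f) :
    ∫ θ, f (X θ) ∂μ = (f 1 + f (-1)) / 2 := by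
  rw [← integral_map hX.aemeasurable hf.aestronglyMeasurable, h,
    integral_smul_measure,
    integral_add_measure ((integrable_const (f 1)).congr (ae_eq_dirac f).symm)
      ((integrable_const (f (-1))).congr (ae_eq_dirac f).symm),
    integral_dirac, integral_dirac]
  simp
  ring

lemma rad_ae {Θ : Type*} [MeasurableSpace Θ] (μ : Measure Θ)
    (X : Θ → ℝ) (hX : Measurable X)
    (h : μ.map X = (2 : ENNReal)⁻¹ • (Measure.dirac (1 : ℝ) + Measure.dirac (-1 : ℝ))) :
    ∀ᵐ θ ∂μ, |X θ| = 1 := by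
  have hm : MeasurableSet (({1, -1} : Set ℝ)ᶜ) :=
    ((measurableSet_singleton 1).union (measurableSet_singleton (-1))).compl
  have h0 : μ (X ⁻¹' ({1, -1} : Set ℝ)ᶜ) = 0 := by
    rw [← Measure.map_apply hX hm, h]
    simp [Measure.dirac_apply' _ hm]
  rw [ae_iff]
  refine measure_mono_null ?_ h0
  intro θ hθ
  simp only [mem_preimage, mem_compl_iff, mem_insert_iff, mem_singleton_iff]
  rintro (h1 | h1) <;> simp [h1] at hθ <;> norm_num at hθ


def dirs : Fin 8 → ℂ
  | ⟨0, _⟩ => 1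
  | ⟨1, _⟩ => -1
  | ⟨2, _⟩ => Complex.I
  | ⟨3, _⟩ => -Complex.I
  | ⟨4, _⟩ => (Real.sqrt 2 : ℂ)⁻¹ * (1 + Complex.I)
  | ⟨5, _⟩ => (Real.sqrt 2 : ℂ)⁻¹ * (1 - Complex.I)
  | ⟨6, _⟩ => (Real.sqrt 2 : ℂ)⁻¹ * (-1 + Complex.I)
  | ⟨7, _⟩ => (Real.sqrt 2 : ℂ)⁻¹ * (-1 - Complex.I)

lemma aux_norm (z : ℂ) (h : z.re ^ 2 + z.im ^ 2 = 2) :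
    ‖(Real.sqrt 2 : ℂ)⁻¹ * z‖ = 1 := by
  have h2 : (0:ℝ) < Real.sqrt 2 := by positivity
  have h2' : Real.sqrt 2 * Real.sqrt 2 = 2 := Real.mul_self_sqrt (by norm_num)
  rw [norm_mul, norm_inv, Complex.norm_real, Real.norm_eq_abs, abs_of_pos h2,
    Complex.norm_def, Complex.normSq_apply]
  rw [show z.re * z.re + z.im * z.im = Real.sqrt 2 * Real.sqrt 2 by nlinarith]
  rw [Real.sqrt_mul_self h2.le]
  field_simp

lemma norm_dirs (l : Fin 8) : ‖dirs l‖ = 1 := by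
  fin_cases l
  · simp [dirs]
  · simp [dirs]
  · simp [dirs]
  · simp [dirs]
  · exact aux_norm _ (by simp; norm_num)
  · exact aux_norm _ (by simp; norm_num)
  · exact aux_norm _ (by simp; norm_num)
  · exact aux_norm _ (by simp; norm_num)

lemma sqrt2_lb : (1.4142 : ℝ) ≤ Real.sqrt 2 := by
  have := Real.sq_sqrt (show (0:ℝ) ≤ 2 by norm_num)
  nlinarith [Real.sqrt_nonneg 2]

lemma sqrt2_ub : Real.sqrt 2 ≤ 1.41422 := by
  have := Real.sq_sqrt (show (0:ℝ) ≤ 2 by norm_num)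
  nlinarith [Real.sqrt_nonneg 2]

/-- max over the 8 directions dominates the norm up to sec(π/8) -/
lemma norm_le_dirs (z : ℂ) (F : ℝ) (h : ∀ l : Fin 8, (dirs l * z).re ≤ F) :
    ‖z‖ ≤ Real.sqrt (4 - 2 * Real.sqrt 2) * F := by
  have s2 : (0:ℝ) < Real.sqrt 2 := by positivity
  have s2' : Real.sqrt 2 * Real.sqrt 2 = 2 := Real.mul_self_sqrt (by norm_num)
  have s2'' : Real.sqrt 2 * (Real.sqrt 2)⁻¹ = 1 := mul_inv_cancel₀ (ne_of_gt s2)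
  have hdiag : ∀ w : ℂ, ((Real.sqrt 2 : ℂ)⁻¹ * w * z).re = (Real.sqrt 2)⁻¹ * (w * z).re := by
    intro w
    rw [mul_assoc, ← Complex.ofReal_inv, Complex.re_ofReal_mul]
  have hx : |z.re| ≤ F := by
    have h0 := h ⟨0, by norm_num⟩; have h1 := h ⟨1, by norm_num⟩
    simp only [dirs, one_mul, neg_mul, Complex.neg_re] at h0 h1
    rw [abs_le]; constructor <;> linarith
  have hy : |z.im| ≤ F := by
    have h2 := h ⟨2, by norm_num⟩; have h3 := h ⟨3, by norm_num⟩
    simp only [dirs, Complex.mul_re, Complex.I_re, Complex.I_im, neg_mul, Complex.neg_re,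
      zero_mul, one_mul, zero_sub, neg_neg, neg_sub] at h2 h3
    rw [abs_le]; constructor <;> linarith
  have hxy : |z.re| + |z.im| ≤ Real.sqrt 2 * F := by
    have h4 := h ⟨4, by norm_num⟩; have h5 := h ⟨5, by norm_num⟩
    have h6 := h ⟨6, by norm_num⟩; have h7 := h ⟨7, by norm_num⟩
    rw [show dirs ⟨4, by norm_num⟩ = (Real.sqrt 2 : ℂ)⁻¹ * (1 + Complex.I) from rfl,
      hdiag] at h4
    rw [show dirs ⟨5, by norm_num⟩ = (Real.sqrt 2 : ℂ)⁻¹ * (1 - Complex.I) from rfl,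
      hdiag] at h5
    rw [show dirs ⟨6, by norm_num⟩ = (Real.sqrt 2 : ℂ)⁻¹ * (-1 + Complex.I) from rfl,
      hdiag] at h6
    rw [show dirs ⟨7, by norm_num⟩ = (Real.sqrt 2 : ℂ)⁻¹ * (-1 - Complex.I) from rfl,
      hdiag] at h7
    simp only [Complex.mul_re, Complex.add_re, Complex.add_im, Complex.sub_re, Complex.sub_im,
      Complex.one_re, Complex.one_im, Complex.I_re, Complex.I_im, Complex.neg_re, Complex.neg_im,
      neg_zero, zero_sub, sub_zero, add_zero, zero_add, one_mul, neg_mul, neg_neg] at h4 h5 h6 h7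
    have lift : ∀ t : ℝ, (Real.sqrt 2)⁻¹ * t ≤ F → t ≤ Real.sqrt 2 * F := by
      intro t ht
      have := mul_le_mul_of_nonneg_left ht s2.le
      rwa [← mul_assoc, s2'', one_mul] at this
    have e4 := lift _ h4
    have e5 := lift _ h5
    have e6 := lift _ h6
    have e7 := lift _ h7
    rcases abs_cases z.re with ⟨ex, _⟩ | ⟨ex, _⟩ <;> rcases abs_cases z.im with ⟨ey, _⟩ | ⟨ey, _⟩ <;>
      rw [ex, ey] <;> linarith
  have hF : 0 ≤ F := (abs_nonneg z.re).trans hx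
  have h44 : (0:ℝ) ≤ 4 - 2 * Real.sqrt 2 := by nlinarith [sqrt2_ub]
  have key : z.re^2 + z.im^2 ≤ (4 - 2*Real.sqrt 2) * F^2 := by
    rcases le_or_gt (|z.re| + |z.im|) F with hc | hc
    · nlinarith [sq_abs z.re, sq_abs z.im, mul_nonneg (abs_nonneg z.re) (abs_nonneg z.im),
        sqrt2_ub, sq_nonneg F,
        mul_nonneg (sub_nonneg.2 hc) (by positivity : (0:ℝ) ≤ F + (|z.re| + |z.im|))]
    · have m1 : 0 ≤ (F - |z.re|) * (F - |z.im|) :=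
        mul_nonneg (sub_nonneg.2 hx) (sub_nonneg.2 hy)
      have m2 : 0 ≤ (|z.re| + |z.im| - F) * (Real.sqrt 2 * F - (|z.re| + |z.im|)) :=
        mul_nonneg (le_of_lt (sub_pos.2 hc)) (sub_nonneg.2 hxy)
      have m3 : 0 ≤ ((Real.sqrt 2 - 1) * F) * (Real.sqrt 2 * F - (|z.re| + |z.im|)) :=
        mul_nonneg (mul_nonneg (by nlinarith [sqrt2_lb]) hF) (sub_nonneg.2 hxy)
      nlinarith [sq_abs z.re, sq_abs z.im, m1, m2, m3]
  have hnorm : ‖z‖ = Real.sqrt (z.re^2 + z.im^2) := by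
    rw [Complex.norm_def, Complex.normSq_apply]
    ring_nf
  rw [hnorm]
  calc Real.sqrt (z.re^2+z.im^2) ≤ Real.sqrt ((4 - 2*Real.sqrt 2) * F^2) :=
        Real.sqrt_le_sqrt key
    _ = Real.sqrt (4 - 2*Real.sqrt 2) * Real.sqrt (F^2) := Real.sqrt_mul h44 _
    _ = _ := by rw [Real.sqrt_sq hF]


variable {Θ : Type*} [MeasurableSpace Θ] {μ : Measure Θ} [IsProbabilityMeasure μ] {m : ℕ}

lemma rad_mgf (ε : Fin m → Θ → ℝ) (hεmeas : ∀ k, Measurable (ε k))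
    (hindep : iIndepFun ε μ)
    (hrad : ∀ k, μ.map (ε k)
      = (2 : ENNReal)⁻¹ • (Measure.dirac (1 : ℝ) + Measure.dirac (-1 : ℝ)))
    (r : Fin m → ℝ) :
    ∫ θ, Real.exp (∑ k, r k * ε k θ) ∂μ ≤ Real.exp ((∑ k, (r k)^2)/2) := by
  have hX : iIndepFun (fun k => fun θ => r k * ε k θ) μ :=
    hindep.comp (fun k x => r k * x) (fun k => measurable_id.const_mul _)
  have hXm : ∀ k, Measurable (fun θ => r k * ε k θ) := fun k => (hεmeas k).const_mul _
  have hsum : ∫ θ, Real.exp (∑ k, r k * ε k θ) ∂μ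
      = mgf (∑ k : Fin m, fun θ => r k * ε k θ) μ 1 := by
    simp [mgf, Finset.sum_apply]
  rw [hsum, hX.mgf_sum hXm Finset.univ]
  calc ∏ k : Fin m, mgf (fun θ => r k * ε k θ) μ 1
      ≤ ∏ k : Fin m, Real.exp ((r k)^2/2) := by
        apply Finset.prod_le_prod (fun k _ => mgf_nonneg)
        intro k _
        have hval : mgf (fun θ => r k * ε k θ) μ 1 = Real.cosh (r k) := by
          have := rad_int μ (ε k) (hεmeas k) (hrad k)
            (fun x => Real.exp (r k * x)) ((measurable_id.const_mul _).exp)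
          simp only [mgf, one_mul]
          rw [this, Real.cosh_eq]
          ring_nf
        rw [hval]
        exact Real.cosh_le_exp_half_sq _
    _ = Real.exp ((∑ k, (r k)^2)/2) := by
        rw [← Real.exp_sum]
        congr 1
        rw [Finset.sum_div]

lemma maximal {ι : Type*} [Fintype ι] (hne : (Finset.univ : Finset ι).Nonempty)
    (Y : ι → Θ → ℝ) (σ : ℝ) (hσ : 0 < σ) (hcard : 2 ≤ Fintype.card ι)
    (hmgf : ∀ t : ℝ, 0 < t → ∀ v : ι, Integrable (fun θ => Real.exp (t * Y v θ)) μ ∧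
        ∫ θ, Real.exp (t * Y v θ) ∂μ ≤ Real.exp (t^2*σ^2/2))
    (hintsup : Integrable (fun θ => Finset.univ.sup' hne (fun v => Y v θ)) μ) :
    ∫ θ, Finset.univ.sup' hne (fun v => Y v θ) ∂μ
      ≤ σ * Real.sqrt (2 * Real.log (Fintype.card ι)) := by
  set V : ℝ := (Fintype.card ι : ℝ) with hVdef
  have hV2 : (2:ℝ) ≤ V := by rw [hVdef]; exact_mod_cast hcard
  have hlogV : 0 < Real.log V := Real.log_pos (by linarith)
  set s := Real.sqrt (2 * Real.log V) with hsdef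
  have hs : 0 < s := Real.sqrt_pos.2 (by linarith)
  have hs2 : s^2 = 2 * Real.log V := Real.sq_sqrt (by linarith)
  set t := s / σ with htdef
  have ht : 0 < t := div_pos hs hσ
  have hint : ∀ v : ι, Integrable (fun θ => Real.exp (t * Y v θ)) μ :=
    fun v => (hmgf t ht v).1
  set u := ∑ v : ι, ∫ θ, Real.exp (t * Y v θ) ∂μ with hudef
  have hu_pos : 0 < u := by
    apply Finset.sum_pos _ hne
    intro v _
    exact mgf_pos (X := Y v) (t := t) (hint v)
  have hub : u ≤ V * Real.exp (t^2*σ^2/2) := by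
    rw [hudef]
    calc ∑ v : ι, ∫ θ, Real.exp (t * Y v θ) ∂μ
        ≤ ∑ _v : ι, Real.exp (t^2*σ^2/2) := Finset.sum_le_sum (fun v _ => (hmgf t ht v).2)
      _ = V * Real.exp (t^2*σ^2/2) := by
          rw [Finset.sum_const, nsmul_eq_mul]
          simp [hVdef]
  have hpt : ∀ θ, Finset.univ.sup' hne (fun v => Y v θ)
      ≤ t⁻¹ * (Real.log u + ((∑ v : ι, Real.exp (t * Y v θ)) - u)/u) := by
    intro θ
    set P := ∑ v : ι, Real.exp (t * Y v θ) with hPdef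
    have hP_pos : 0 < P := Finset.sum_pos (fun v _ => Real.exp_pos _) hne
    set M := Finset.univ.sup' hne (fun v => Y v θ) with hMdef
    obtain ⟨v₀, _, hv₀⟩ := Finset.exists_mem_eq_sup' hne (fun v => Y v θ)
    have h1 : Real.exp (t * M) ≤ P := by
      rw [hMdef, hv₀]
      exact Finset.single_le_sum (f := fun v => Real.exp (t * Y v θ))
        (fun v _ => (Real.exp_pos _).le) (Finset.mem_univ v₀)
    have h2 : t * M ≤ Real.log P := by
      rw [← Real.log_exp (t * M)]
      exact Real.log_le_log (Real.exp_pos _) h1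
    have h3 : Real.log P ≤ Real.log u + (P - u)/u := by
      have hd := Real.log_le_sub_one_of_pos (div_pos hP_pos hu_pos)
      rw [Real.log_div hP_pos.ne' hu_pos.ne'] at hd
      have h4 : P/u - 1 = (P - u)/u := by field_simp
      linarith [hd, h4]
    calc M = t⁻¹ * (t * M) := by field_simp
      _ ≤ t⁻¹ * (Real.log u + (P - u)/u) := by
          apply mul_le_mul_of_nonneg_left _ (inv_nonneg.2 ht.le)
          linarith
  have hint_rhs : Integrable
      (fun θ => t⁻¹ * (Real.log u + ((∑ v : ι, Real.exp (t * Y v θ)) - u)/u)) μ := by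
    apply Integrable.const_mul
    apply Integrable.add (integrable_const _)
    apply Integrable.div_const
    exact (integrable_finset_sum _ (fun v _ => hint v)).sub (integrable_const _)
  have hmono := integral_mono hintsup hint_rhs hpt
  have hIrhs : ∫ θ, t⁻¹ * (Real.log u + ((∑ v : ι, Real.exp (t * Y v θ)) - u)/u) ∂μ
      = t⁻¹ * Real.log u := by
    have hsum_int : Integrable (fun θ => (∑ v : ι, Real.exp (t * Y v θ))) μ :=
      integrable_finset_sum _ (fun v _ => hint v)
    have hg_int : Integrable (fun θ => ((∑ v : ι, Real.exp (t * Y v θ)) - u)/u) μ :=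
      (hsum_int.sub (integrable_const u)).div_const u
    rw [integral_const_mul]
    congr 1
    rw [integral_add (integrable_const _) hg_int]
    rw [integral_const]
    simp only [measure_univ, ENNReal.toReal_one, smul_eq_mul, one_mul, probReal_univ]
    have hz : ∫ θ, ((∑ v : ι, Real.exp (t * Y v θ)) - u)/u ∂μ = 0 := by
      rw [integral_div, integral_sub hsum_int (integrable_const _),
        integral_finset_sum _ (fun v _ => hint v), integral_const]
      simp [measure_univ, ← hudef]
    rw [hz, add_zero]
  rw [hIrhs] at hmono
  have hfin : t⁻¹ * Real.log u ≤ σ * s := by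
    have hlogu : Real.log u ≤ Real.log V + t^2*σ^2/2 := by
      calc Real.log u ≤ Real.log (V * Real.exp (t^2*σ^2/2)) := Real.log_le_log hu_pos hub
        _ = Real.log V + t^2*σ^2/2 := by
            rw [Real.log_mul (by linarith) (Real.exp_ne_zero _), Real.log_exp]
    calc t⁻¹ * Real.log u ≤ t⁻¹ * (Real.log V + t^2*σ^2/2) := by
          apply mul_le_mul_of_nonneg_left hlogu (inv_nonneg.2 ht.le)
      _ = σ * s := by
          have hlogV' : Real.log V = s^2/2 := by rw [hs2]; ring
          rw [hlogV', htdef]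
          field_simp
          ring
  exact hmono.trans hfin


lemma exp_le_inv (x : ℝ) (h0 : 0 ≤ x) (h1 : x < 1) : Real.exp x ≤ (1 - x)⁻¹ := by
  have h2 : 1 - x ≤ Real.exp (-x) := by linarith [Real.add_one_le_exp (-x)]
  have h3 : 0 < 1 - x := by linarith
  rw [Real.exp_neg] at h2
  have h4 := inv_anti₀ h3 h2
  rwa [inv_inv] at h4

lemma log6_lb : (1.7:ℝ) ≤ Real.log 6 := by
  rw [Real.le_log_iff_exp_le (by norm_num : (0:ℝ) < 6)]
  have e175 : Real.exp 0.175 ≤ (40/33 : ℝ) := by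
    have := exp_le_inv 0.175 (by norm_num) (by norm_num)
    calc Real.exp 0.175 ≤ (1 - 0.175 : ℝ)⁻¹ := this
      _ = 40/33 := by norm_num
  have e07 : Real.exp 0.7 ≤ (40/33:ℝ)^4 := by
    rw [show (0.7:ℝ) = (4:ℕ) * 0.175 by norm_num, Real.exp_nat_mul]
    exact pow_le_pow_left₀ (Real.exp_pos _).le e175 4
  rw [show (1.7:ℝ) = 1 + 0.7 by norm_num, Real.exp_add]
  calc Real.exp 1 * Real.exp 0.7 ≤ 2.7182818286 * (40/33:ℝ)^4 :=
        mul_le_mul Real.exp_one_lt_d9.le e07 (Real.exp_pos _).le (by norm_num)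
    _ ≤ 6 := by norm_num

lemma log163_lb : (1.6:ℝ) ≤ Real.log (16/3) := by
  rw [Real.le_log_iff_exp_le (by norm_num : (0:ℝ) < 16/3)]
  have e15 : Real.exp 0.15 ≤ (20/17 : ℝ) := by
    calc Real.exp 0.15 ≤ (1 - 0.15 : ℝ)⁻¹ := exp_le_inv 0.15 (by norm_num) (by norm_num)
      _ = 20/17 := by norm_num
  have e06 : Real.exp 0.6 ≤ (20/17:ℝ)^4 := by
    rw [show (0.6:ℝ) = (4:ℕ) * 0.15 by norm_num, Real.exp_nat_mul]
    exact pow_le_pow_left₀ (Real.exp_pos _).le e15 4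
  rw [show (1.6:ℝ) = 1 + 0.6 by norm_num, Real.exp_add]
  calc Real.exp 1 * Real.exp 0.6 ≤ 2.7182818286 * (20/17:ℝ)^4 :=
        mul_le_mul Real.exp_one_lt_d9.le e06 (Real.exp_pos _).le (by norm_num)
    _ ≤ 16/3 := by norm_num

set_option maxHeartbeats 2000000 in
lemma log163_ub : Real.log (16/3) ≤ 1.68 := by
  rw [Real.log_le_iff_le_exp (by norm_num : (0:ℝ) < 16/3)]
  have e002 : Real.exp 0.02 ≤ (50/49 : ℝ) := by
    calc Real.exp 0.02 ≤ (1 - 0.02 : ℝ)⁻¹ := exp_le_inv 0.02 (by norm_num) (by norm_num)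
      _ = 50/49 := by norm_num
  have e032 : Real.exp 0.32 ≤ (50/49:ℝ)^16 := by
    rw [show (0.32:ℝ) = (16:ℕ) * 0.02 by norm_num, Real.exp_nat_mul]
    exact pow_le_pow_left₀ (Real.exp_pos _).le e002 16
  have e2 : (2.7182818283:ℝ)^2 ≤ Real.exp 2 := by
    rw [show (2:ℝ) = 1 + 1 by norm_num, Real.exp_add]
    nlinarith [Real.exp_one_gt_d9]
  rw [show (1.68:ℝ) = 2 - 0.32 by norm_num, Real.exp_sub]
  calc (16/3 : ℝ) ≤ (2.7182818283:ℝ)^2 / (50/49:ℝ)^16 := by norm_num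
    _ ≤ Real.exp 2 / Real.exp 0.32 := by
        apply div_le_div₀ (Real.exp_pos 2).le e2 (by positivity) e032

set_option maxHeartbeats 2000000 in
lemma final_numeric (L V : ℝ) (hL : 6 ≤ L) (hV8 : 0 < V) (hVle : V ≤ (16/3) * L) :
    Real.sqrt (4 - 2*Real.sqrt 2) * ((8/3) * Real.sqrt (Real.log V))
      ≤ 3 * Real.sqrt (Real.log L) + 1.61 := by
  set x := Real.log L with hxdef
  set a := Real.log (16/3) with hadef
  have hx17 : (1.7:ℝ) ≤ x := by
    calc (1.7:ℝ) ≤ Real.log 6 := log6_lb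
      _ ≤ x := Real.log_le_log (by norm_num) hL
  have ha1 : (1.6:ℝ) ≤ a := log163_lb
  have ha2 : a ≤ 1.68 := log163_ub
  have hlogV : Real.log V ≤ x + a := by
    calc Real.log V ≤ Real.log ((16/3) * L) := Real.log_le_log hV8 hVle
      _ = a + x := Real.log_mul (by norm_num) (by positivity)
      _ = x + a := by ring
  -- c bound
  have hcsq : Real.sqrt (4 - 2*Real.sqrt 2) ≤ 1.08241 := by
    have h44 : (0:ℝ) ≤ 4 - 2*Real.sqrt 2 := by nlinarith [sqrt2_ub]
    have : (4 - 2*Real.sqrt 2 : ℝ) ≤ 1.08241^2 := by nlinarith [sqrt2_lb]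
    calc Real.sqrt (4 - 2*Real.sqrt 2) ≤ Real.sqrt (1.08241^2) := Real.sqrt_le_sqrt this
      _ = 1.08241 := Real.sqrt_sq (by norm_num)
  have hcpos : (0:ℝ) ≤ Real.sqrt (4 - 2*Real.sqrt 2) := Real.sqrt_nonneg _
  set c := Real.sqrt (4 - 2*Real.sqrt 2) * (8/3) with hcdef
  have hc : c ≤ 2.88643 := by rw [hcdef]; nlinarith [hcsq]
  have hc0 : 0 ≤ c := by positivity
  -- sqrt decomposition
  have hxa_pos : (0:ℝ) < x + a := by linarith
  have hx_pos : (0:ℝ) < x := by linarith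
  set s1 := Real.sqrt (x + a) with hs1def
  set s2 := Real.sqrt x with hs2def
  have hs1 : 0 < s1 := Real.sqrt_pos.2 hxa_pos
  have hs2 : 0 ≤ s2 := Real.sqrt_nonneg _
  have hs1sq : s1^2 = x + a := Real.sq_sqrt hxa_pos.le
  have hs2sq : s2^2 = x := Real.sq_sqrt hx_pos.le
  have hdecomp : s1 = s2 + a/(s1 + s2) := by
    have hsum : 0 < s1 + s2 := by linarith
    field_simp
    nlinarith [hs1sq, hs2sq]
  -- lower bounds for s1, s2
  have hs1lb : Real.sqrt 3.3 ≤ s1 := by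
    apply Real.sqrt_le_sqrt; linarith
  have hs2lb : Real.sqrt 1.7 ≤ s2 := by
    apply Real.sqrt_le_sqrt; linarith
  have h33 : (1.8165:ℝ) ≤ Real.sqrt 3.3 := by
    have := Real.sq_sqrt (show (0:ℝ) ≤ 3.3 by norm_num)
    nlinarith [Real.sqrt_nonneg 3.3]
  have h17 : (1.3038:ℝ) ≤ Real.sqrt 1.7 := by
    have := Real.sq_sqrt (show (0:ℝ) ≤ 1.7 by norm_num)
    nlinarith [Real.sqrt_nonneg 1.7]
  have hsum_lb : (3.1203:ℝ) ≤ s1 + s2 := by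
    calc (3.1203:ℝ) = 1.8165 + 1.3038 := by norm_num
      _ ≤ Real.sqrt 3.3 + Real.sqrt 1.7 := by linarith
      _ ≤ s1 + s2 := by linarith
  set f := a/(s1+s2) with hfdef
  have hf0 : 0 ≤ f := by rw [hfdef]; positivity
  have hfrac : f ≤ 1.68/3.1203 := by
    rw [hfdef, div_le_div_iff₀ (by linarith) (by norm_num)]
    nlinarith
  have hlogV_sqrt : Real.sqrt (Real.log V) ≤ s1 := Real.sqrt_le_sqrt hlogV
  have e0 : Real.sqrt (4 - 2*Real.sqrt 2) * ((8/3) * Real.sqrt (Real.log V))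
      = c * Real.sqrt (Real.log V) := by rw [hcdef]; ring
  have e1 : c * Real.sqrt (Real.log V) ≤ c * s1 :=
    mul_le_mul_of_nonneg_left hlogV_sqrt hc0
  have e2 : c * s1 = c * s2 + c * f := by rw [hdecomp]; ring
  have e3 : c * f ≤ 2.88643 * (1.68/3.1203) := mul_le_mul hc hfrac hf0 (by norm_num)
  have e4 : c * s2 ≤ 3 * s2 := mul_le_mul_of_nonneg_right (by linarith) hs2
  have e5 : (2.88643:ℝ) * (1.68/3.1203) ≤ 1.61 := by norm_num
  linarith


lemma net (c d : ℝ) (hcd : c < d) (N : ℕ) (hN : 0 < N) (τ : ℝ) (hτ : τ ∈ Icc c d) :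
    ∃ p : Fin N, |τ - (c + ((p:ℝ) + 1/2) * ((d - c)/N))| ≤ (d - c)/(2*N) ∧
      (c + ((p:ℝ) + 1/2) * ((d - c)/N)) ∈ Icc c d := by
  have hdc : 0 < d - c := by linarith [hτ.1, hτ.2]
  have hNR : (0:ℝ) < N := by exact_mod_cast hN
  set h : ℝ := (d - c)/N with hhdef
  have hh : 0 < h := by positivity
  have hNh : (N:ℝ) * h = d - c := by rw [hhdef]; field_simp
  set q : ℕ := ⌊(τ - c)/h⌋₊ with hqdef
  have harg : 0 ≤ (τ - c)/h := div_nonneg (by linarith [hτ.1]) hh.le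
  set p : ℕ := min q (N - 1) with hpdef
  have hpN : p < N := by
    have : N - 1 < N := Nat.sub_lt hN one_pos
    exact lt_of_le_of_lt (min_le_right _ _) this
  have hpn1 : (p:ℝ) ≤ (N:ℝ) - 1 := by
    have h1 : p ≤ N - 1 := min_le_right _ _
    have h2 : (p:ℝ) ≤ ((N-1 : ℕ):ℝ) := by exact_mod_cast h1
    rw [Nat.cast_sub hN] at h2
    push_cast at h2
    linarith
  have hlow : c + p * h ≤ τ := by
    have hpq : (p:ℝ) ≤ q := by exact_mod_cast (min_le_left q (N-1))
    have hfl : (q:ℝ) ≤ (τ - c)/h := Nat.floor_le harg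
    have : (p:ℝ) * h ≤ τ - c := by
      calc (p:ℝ) * h ≤ ((τ - c)/h) * h := by
            apply mul_le_mul_of_nonneg_right (hpq.trans hfl) hh.le
        _ = τ - c := by field_simp
    linarith
  have hhigh : τ ≤ c + (p + 1) * h := by
    rcases le_or_gt q (N-1) with hcase | hcase
    · have hpq : p = q := min_eq_left hcase
      have hfl : (τ - c)/h < q + 1 := Nat.lt_floor_add_one _
      have : τ - c < (q + 1) * h := by
        calc τ - c = ((τ - c)/h) * h := by field_simp
          _ < (q + 1) * h := by apply mul_lt_mul_of_pos_right _ hh; exact_mod_cast hfl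
      rw [hpq]
      push_cast
      linarith
    · have hqN : N ≤ q := by omega
      have : (p:ℝ) + 1 = N := by
        have hp' : p = N - 1 := min_eq_right (by omega)
        rw [hp']
        rw [Nat.cast_sub hN]
        push_cast
        ring
      rw [this, hNh]
      linarith [hτ.2]
  refine ⟨⟨p, hpN⟩, ?_, ?_, ?_⟩
  · rw [abs_le]
    constructor
    · have : (d-c)/(2*N) = h/2 := by rw [hhdef]; ring
      rw [this]
      have : c + ((p:ℝ) + 1/2) * h = (c + p * h) + h/2 := by ring
      rw [this]
      linarith
    · have h2 : (d-c)/(2*N) = h/2 := by rw [hhdef]; ring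
      rw [h2]
      have h3 : c + ((p:ℝ) + 1/2) * h = (c + (p+1) * h) - h/2 := by ring
      rw [h3]
      linarith
  · have : 0 ≤ ((p:ℝ) + 1/2) * h := by positivity
    simp only [Fin.val_mk]
    linarith
  · simp only [Fin.val_mk]
    have : ((p:ℝ) + 1/2) * h ≤ (N:ℝ) * h := by
      apply mul_le_mul_of_nonneg_right _ hh.le
      linarith
    rw [hNh] at this
    linarith

lemma hasDerivAt_cexp_freq (w τ₀ τ : ℝ) :
    HasDerivAt (fun t : ℝ => Complex.exp (Complex.I * w * ((t:ℂ) - (τ₀:ℂ))))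
      (Complex.I * w * Complex.exp (Complex.I * w * ((τ:ℂ) - (τ₀:ℂ)))) τ := by
  have h2 : HasDerivAt (fun z : ℂ => Complex.I * (w:ℂ) * (z - (τ₀:ℂ)))
      (Complex.I * w) (τ:ℂ) := by
    simpa using ((hasDerivAt_id ((τ:ℝ):ℂ)).sub_const ((τ₀:ℝ):ℂ)).const_mul (Complex.I * (w:ℂ))
  have h1 := h2.cexp
  have h3 := h1.comp_ofReal
  convert h3 using 1
  ring

lemma norm_cexp_freq (w τ₀ τ : ℝ) :
    ‖Complex.exp (Complex.I * w * ((τ:ℂ) - (τ₀:ℂ)))‖ = 1 := by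
  rw [show Complex.I * w * ((τ:ℂ) - (τ₀:ℂ)) = ((w * (τ - τ₀) : ℝ) : ℂ) * Complex.I by
    push_cast; ring]
  exact Complex.norm_exp_ofReal_mul_I _

end RPE


open RPE

set_option maxHeartbeats 2000000 in
/-- **Expected supremum of the Rademacher process.**
Suppose `|Ω||T| ≥ 3`.  Then `E[sup_{τ∈T} |Z'(τ)|] ≤ |A|M₃(3√(log(2|Ω||T|)) + 1.61)`. -/
theorem rademacher_process_expectation
    {Θ : Type*} [MeasurableSpace Θ] (μ : Measure Θ) [IsProbabilityMeasure μ]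
    (ωmax τmin τmax : ℝ) (hωmax : 0 < ωmax) (hTlen : τmin < τmax)
    (shat : ℝ → ℂ) (hmeas : Measurable shat)
    (hbd : ∃ C : ℝ, ∀ x : ℝ, ‖shat x‖ ≤ C)
    (hvanish : ∀ x : ℝ, x ∉ Set.Icc (-ωmax) ωmax → shat x = 0)
    (A : ℂ) (hA : A ≠ 0) (τ₀ : ℝ) (hτ₀ : τ₀ ∈ Set.Icc τmin τmax)
    (hΩT : 3 ≤ (2 * ωmax) * (τmax - τmin))
    (m : ℕ) (hm : 0 < m)
    (ωs ωs' : Fin m → ℝ)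
    (hωs : ∀ k, ωs k ∈ Set.Icc (-ωmax) ωmax)
    (hωs' : ∀ k, ωs' k ∈ Set.Icc (-ωmax) ωmax)
    (hpos : 0 < ∑ k : Fin m, (‖shat (ωs k)‖ ^ 4 + ‖shat (ωs' k)‖ ^ 4))
    (ε : Fin m → Θ → ℝ) (hεmeas : ∀ k, Measurable (ε k))
    (hindep : iIndepFun ε μ)
    (hrad : ∀ k, μ.map (ε k)
      = (2 : ENNReal)⁻¹ • (Measure.dirac (1 : ℝ) + Measure.dirac (-1 : ℝ)))
    (Z' : ℝ → Θ → ℂ)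
    (hZ' : ∀ τ θ, Z' τ θ
      = A * ∑ k : Fin m, (ε k θ : ℂ)
          * ((‖shat (ωs k)‖ ^ 2 : ℂ) * Complex.exp (Complex.I * (ωs k) * (τ - τ₀))
            - (‖shat (ωs' k)‖ ^ 2 : ℂ) * Complex.exp (Complex.I * (ωs' k) * (τ - τ₀))))
    (M₃ : ℝ)
    (hM₃ : M₃ = Real.sqrt (∑ k : Fin m, (‖shat (ωs k)‖ ^ 4 + ‖shat (ωs' k)‖ ^ 4))) :
    ∫ θ, (⨆ τ ∈ Set.Icc τmin τmax, ‖Z' τ θ‖) ∂μ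
      ≤ ‖A‖ * M₃
        * (3 * Real.sqrt (Real.log (2 * ((2 * ωmax) * (τmax - τmin)))) + 1.61) := by
  classical
  obtain ⟨hτ₀1, hτ₀2⟩ := hτ₀
  have hT : 0 < τmax - τmin := by linarith
  set Lr : ℝ := 2 * ((2 * ωmax) * (τmax - τmin)) with hLrdef
  have hL6 : (6:ℝ) ≤ Lr := by rw [hLrdef]; linarith
  set N : ℕ := ⌈(2 * ωmax) * (τmax - τmin)⌉₊ with hNdef
  have hNlb : (2 * ωmax) * (τmax - τmin) ≤ (N:ℝ) := Nat.le_ceil _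
  have hN0 : 0 < N := by
    rw [hNdef]
    exact Nat.ceil_pos.2 (by positivity)
  have hNub : (N:ℝ) ≤ Lr/2 + 1 := by
    have h1 := Nat.ceil_lt_add_one (show (0:ℝ) ≤ (2*ωmax)*(τmax - τmin) by positivity)
    rw [hNdef, hLrdef]
    linarith
  set V : ℝ := ((N * 8 : ℕ) : ℝ) with hVdef
  have hV8 : (0:ℝ) < V := by
    rw [hVdef]
    have : 0 < N * 8 := by omega
    exact_mod_cast this
  have h8N : V ≤ (16/3) * Lr := by
    rw [hVdef]
    push_cast
    linarith
  -- coefficients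
  set a : Fin m → ℝ := fun k => ‖shat (ωs k)‖^2 with hadef
  set b : Fin m → ℝ := fun k => ‖shat (ωs' k)‖^2 with hbdef
  have ha0 : ∀ k, 0 ≤ a k := fun k => by rw [hadef]; positivity
  have hb0 : ∀ k, 0 ≤ b k := fun k => by rw [hbdef]; positivity
  have habω : ∀ k, |ωs k| ≤ ωmax := fun k => abs_le.2 ⟨(hωs k).1, (hωs k).2⟩
  have habω' : ∀ k, |ωs' k| ≤ ωmax := fun k => abs_le.2 ⟨(hωs' k).1, (hωs' k).2⟩
  have hM3sq : M₃^2 = ∑ k, ((a k)^2 + (b k)^2) := by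
    rw [hM₃, Real.sq_sqrt (Finset.sum_nonneg (fun k _ => by positivity))]
    apply Finset.sum_congr rfl
    intro k _
    rw [hadef, hbdef]
    ring
  have hM3pos : 0 < M₃ := by rw [hM₃]; exact Real.sqrt_pos.2 hpos
  have hA0 : (0:ℝ) < ‖A‖ := norm_pos_iff.2 hA
  -- the process family
  set g : ℕ → ℝ → Θ → ℂ := fun n τ θ => A * ∑ k, (ε k θ : ℂ) *
      ((Complex.I * ωs k)^n * (a k : ℂ)
          * Complex.exp (Complex.I * ωs k * ((τ:ℂ) - (τ₀:ℂ)))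
        - (Complex.I * ωs' k)^n * (b k : ℂ)
          * Complex.exp (Complex.I * ωs' k * ((τ:ℂ) - (τ₀:ℂ)))) with hgdef
  have hg0 : ∀ τ θ, Z' τ θ = g 0 τ θ := by
    intro τ θ
    rw [hZ', hgdef]
    simp only [pow_zero, one_mul]
    congr 1
    apply Finset.sum_congr rfl
    intro k _
    rw [hadef, hbdef]
    push_cast
    ring
  have hgmeas : ∀ n τ, Measurable (fun θ => g n τ θ) := by
    intro n τ
    simp only [hgdef]
    apply Measurable.const_mul
    apply Finset.measurable_sum
    intro k _
    exact (Complex.measurable_ofReal.comp (hεmeas k)).mul_const _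
  set CW : ℝ := ‖A‖ * ∑ k, (a k + b k) with hCWdef
  set W : Θ → ℝ := fun θ => ‖A‖ * ∑ k, |ε k θ| * (a k + b k) with hWdef
  have hW0 : ∀ θ, 0 ≤ W θ := by
    intro θ
    rw [hWdef]
    apply mul_nonneg (norm_nonneg _)
    apply Finset.sum_nonneg
    intro k _
    exact mul_nonneg (abs_nonneg _) (by linarith [ha0 k, hb0 k])
  -- norm of the basic terms
  have hnorm_t : ∀ (n : ℕ) (k : Fin m) (τ : ℝ),
      ‖(Complex.I * ωs k)^n * (a k : ℂ)
          * Complex.exp (Complex.I * ωs k * ((τ:ℂ) - (τ₀:ℂ)))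
        - (Complex.I * ωs' k)^n * (b k : ℂ)
          * Complex.exp (Complex.I * ωs' k * ((τ:ℂ) - (τ₀:ℂ)))‖
        ≤ ωmax^n * (a k + b k) := by
    intro n k τ
    have hpow : ∀ w : ℝ, ‖(Complex.I * (w:ℂ))^n‖ = |w|^n := by
      intro w
      rw [norm_pow, norm_mul, Complex.norm_I, one_mul, Complex.norm_real, Real.norm_eq_abs]
    have h1 : ‖(Complex.I * (ωs k:ℂ))^n * (a k : ℂ)
        * Complex.exp (Complex.I * ωs k * ((τ:ℂ) - (τ₀:ℂ)))‖ = |ωs k|^n * a k := by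
      rw [norm_mul, norm_mul, hpow, norm_cexp_freq, mul_one, Complex.norm_real,
        Real.norm_eq_abs, abs_of_nonneg (ha0 k)]
    have h2 : ‖(Complex.I * (ωs' k:ℂ))^n * (b k : ℂ)
        * Complex.exp (Complex.I * ωs' k * ((τ:ℂ) - (τ₀:ℂ)))‖ = |ωs' k|^n * b k := by
      rw [norm_mul, norm_mul, hpow, norm_cexp_freq, mul_one, Complex.norm_real,
        Real.norm_eq_abs, abs_of_nonneg (hb0 k)]
    calc ‖_ - _‖ ≤ |ωs k|^n * a k + |ωs' k|^n * b k := by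
          rw [← h1, ← h2]; exact norm_sub_le _ _
      _ ≤ ωmax^n * a k + ωmax^n * b k := by
          have p1 : |ωs k|^n ≤ ωmax^n := pow_le_pow_left₀ (abs_nonneg _) (habω k) n
          have p2 : |ωs' k|^n ≤ ωmax^n := pow_le_pow_left₀ (abs_nonneg _) (habω' k) n
          have := mul_le_mul_of_nonneg_right p1 (ha0 k)
          have := mul_le_mul_of_nonneg_right p2 (hb0 k)
          linarith
      _ = ωmax^n * (a k + b k) := by ring
  have hgW : ∀ n τ θ, ‖g n τ θ‖ ≤ ωmax^n * W θ := by
    intro n τ θ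
    simp only [hgdef, hWdef]
    rw [norm_mul]
    calc ‖A‖ * ‖∑ k, (ε k θ : ℂ) *
        ((Complex.I * ωs k)^n * (a k : ℂ)
            * Complex.exp (Complex.I * ωs k * ((τ:ℂ) - (τ₀:ℂ)))
          - (Complex.I * ωs' k)^n * (b k : ℂ)
            * Complex.exp (Complex.I * ωs' k * ((τ:ℂ) - (τ₀:ℂ))))‖
        ≤ ‖A‖ * ∑ k, |ε k θ| * (ωmax^n * (a k + b k)) := by
          apply mul_le_mul_of_nonneg_left _ (norm_nonneg A)
          calc ‖∑ k, _‖ ≤ ∑ k, ‖(ε k θ : ℂ) *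
              ((Complex.I * ωs k)^n * (a k : ℂ)
                  * Complex.exp (Complex.I * ωs k * ((τ:ℂ) - (τ₀:ℂ)))
                - (Complex.I * ωs' k)^n * (b k : ℂ)
                  * Complex.exp (Complex.I * ωs' k * ((τ:ℂ) - (τ₀:ℂ))))‖ :=
              norm_sum_le _ _
            _ ≤ ∑ k, |ε k θ| * (ωmax^n * (a k + b k)) := by
              apply Finset.sum_le_sum
              intro k _
              rw [norm_mul, Complex.norm_real, Real.norm_eq_abs]
              exact mul_le_mul_of_nonneg_left (hnorm_t n k τ) (abs_nonneg _)
      _ = ωmax^n * (‖A‖ * ∑ k, |ε k θ| * (a k + b k)) := by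
          rw [Finset.mul_sum, Finset.mul_sum, Finset.mul_sum]
          apply Finset.sum_congr rfl
          intro k _
          ring
  have hgderiv : ∀ n τ θ, HasDerivAt (fun t => g n t θ) (g (n+1) τ θ) τ := by
    intro n τ θ
    have hterm : ∀ k : Fin m, HasDerivAt (fun t : ℝ => (ε k θ : ℂ) *
        ((Complex.I * ωs k)^n * (a k : ℂ)
            * Complex.exp (Complex.I * ωs k * ((t:ℂ) - (τ₀:ℂ)))
          - (Complex.I * ωs' k)^n * (b k : ℂ)
            * Complex.exp (Complex.I * ωs' k * ((t:ℂ) - (τ₀:ℂ)))))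
        ((ε k θ : ℂ) * ((Complex.I * ωs k)^(n+1) * (a k : ℂ)
            * Complex.exp (Complex.I * ωs k * ((τ:ℂ) - (τ₀:ℂ)))
          - (Complex.I * ωs' k)^(n+1) * (b k : ℂ)
            * Complex.exp (Complex.I * ωs' k * ((τ:ℂ) - (τ₀:ℂ))))) τ := by
      intro k
      have h1 := (hasDerivAt_cexp_freq (ωs k) τ₀ τ).const_mul
        ((Complex.I * (ωs k : ℂ))^n * (a k : ℂ))
      have h2 := (hasDerivAt_cexp_freq (ωs' k) τ₀ τ).const_mul
        ((Complex.I * (ωs' k : ℂ))^n * (b k : ℂ))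
      have h3 := (h1.fun_sub h2).const_mul ((ε k θ : ℂ))
      convert h3 using 1
      rfl
      ring
    have hsum := HasDerivAt.fun_sum (fun k (_ : k ∈ Finset.univ) => hterm k)
    have hfin := hsum.const_mul A
    simp only [hgdef]
    convert hfin using 1
  -- sup process
  set S : ℕ → Θ → ℝ := fun n θ => sSup ((fun τ => ‖g n τ θ‖) '' Icc τmin τmax) with hSdef
  have hIccne : (Icc τmin τmax).Nonempty := nonempty_Icc.2 hTlen.le
  have hSbdd : ∀ n θ, BddAbove ((fun τ => ‖g n τ θ‖) '' Icc τmin τmax) := by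
    intro n θ
    refine ⟨ωmax^n * W θ, ?_⟩
    rintro _ ⟨τ, hτ, rfl⟩
    exact hgW n τ θ
  have hleS : ∀ n θ τ, τ ∈ Icc τmin τmax → ‖g n τ θ‖ ≤ S n θ := by
    intro n θ τ hτ
    exact le_csSup (hSbdd n θ) ⟨τ, hτ, rfl⟩
  have hSle : ∀ n θ, S n θ ≤ ωmax^n * W θ := by
    intro n θ
    apply csSup_le (hIccne.image _)
    rintro _ ⟨τ, hτ, rfl⟩
    exact hgW n τ θ
  have hS0 : ∀ n θ, 0 ≤ S n θ := by
    intro n θ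
    exact le_trans (norm_nonneg _) (hleS n θ τmin ⟨le_refl _, hTlen.le⟩)
  -- net points and directions
  set pts : Fin N → ℝ := fun p => τmin + ((p:ℝ) + 1/2) * ((τmax - τmin)/N) with hptsdef
  set secC : ℝ := Real.sqrt (4 - 2*Real.sqrt 2) with hsecdef
  have hsec_pos : 0 < secC := by
    rw [hsecdef]
    exact Real.sqrt_pos.2 (by nlinarith [sqrt2_ub])
  haveI hnei : Nonempty (Fin N × Fin 8) := ⟨(⟨0, hN0⟩, 0)⟩
  have hne : (Finset.univ : Finset (Fin N × Fin 8)).Nonempty := Finset.univ_nonempty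
  set Y : ℕ → (Fin N × Fin 8) → Θ → ℝ :=
    fun n v θ => (dirs v.2 * g n (pts v.1) θ).re with hYdef
  set maxY : ℕ → Θ → ℝ := fun n θ => Finset.univ.sup' hne (fun v => Y n v θ) with hmaxYdef
  have hYle : ∀ n (v : Fin N × Fin 8) θ, Y n v θ ≤ maxY n θ := by
    intro n v θ
    rw [hmaxYdef]
    exact Finset.le_sup' (fun v => Y n v θ) (Finset.mem_univ v)
  have hnormle : ∀ n θ (p : Fin N), ‖g n (pts p) θ‖ ≤ secC * maxY n θ := by
    intro n θ p
    rw [hsecdef]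
    apply norm_le_dirs
    intro l
    exact hYle n (p, l) θ
  have hmaxY0 : ∀ n θ, 0 ≤ maxY n θ := by
    intro n θ
    have h := hnormle n θ ⟨0, hN0⟩
    nlinarith [norm_nonneg (g n (pts ⟨0, hN0⟩) θ), hsec_pos]
  -- chaining step
  have hchain : ∀ n θ, S n θ ≤ secC * maxY n θ + (4*ωmax)⁻¹ * S (n+1) θ := by
    intro n θ
    apply csSup_le (hIccne.image _)
    rintro _ ⟨τ, hτ, rfl⟩
    obtain ⟨p, hdist, hmem⟩ := net τmin τmax hTlen N hN0 τ hτ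
    have hpts_eq : pts p = τmin + ((p:ℝ) + 1/2) * ((τmax - τmin)/N) := rfl
    have hmvt := Convex.norm_image_sub_le_of_norm_hasDerivWithin_le
      (f := fun t => g n t θ) (f' := fun t => g (n+1) t θ) (s := Icc τmin τmax)
      (fun x _ => (hgderiv n x θ).hasDerivWithinAt)
      (fun x hx => hleS (n+1) θ x hx) (convex_Icc _ _) hmem hτ
    have hdist' : ‖τ - pts p‖ ≤ (4*ωmax)⁻¹ := by
      rw [Real.norm_eq_abs, hpts_eq]
      calc |τ - (τmin + ((p:ℝ) + 1/2) * ((τmax - τmin)/N))| ≤ (τmax - τmin)/(2*N) := hdist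
        _ ≤ (4*ωmax)⁻¹ := by
            rw [inv_eq_one_div, div_le_div_iff₀ (by positivity) (by linarith)]
            have hNR : (0:ℝ) < N := by exact_mod_cast hN0
            nlinarith [hNlb]
    have hsplit : g n τ θ = g n (pts p) θ + (g n τ θ - g n (pts p) θ) := by ring
    calc ‖g n τ θ‖ ≤ ‖g n (pts p) θ‖ + ‖g n τ θ - g n (pts p) θ‖ := by
          rw [hsplit]
          exact (norm_add_le _ _).trans (by rw [← hsplit])
      _ ≤ secC * maxY n θ + (4*ωmax)⁻¹ * S (n+1) θ := by
          have h2 : ‖g n τ θ - g n (pts p) θ‖ ≤ S (n+1) θ * (4*ωmax)⁻¹ :=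
            hmvt.trans (mul_le_mul_of_nonneg_left hdist' (hS0 (n+1) θ))
          have := hnormle n θ p
          linarith
  -- unrolling
  have hunroll : ∀ J θ, S 0 θ ≤ (∑ j ∈ Finset.range J, ((4*ωmax)⁻¹)^j * (secC * maxY j θ))
      + ((4*ωmax)⁻¹)^J * S J θ := by
    intro J θ
    induction J with
    | zero => simp
    | succ J ih =>
      have h1' : ((4*ωmax)⁻¹)^J * S J θ ≤ ((4*ωmax)⁻¹)^J * (secC * maxY J θ)
          + ((4*ωmax)⁻¹)^(J+1) * S (J+1) θ := by
        calc ((4*ωmax)⁻¹)^J * S J θ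
            ≤ ((4*ωmax)⁻¹)^J * (secC * maxY J θ + (4*ωmax)⁻¹ * S (J+1) θ) :=
              mul_le_mul_of_nonneg_left (hchain J θ) (by positivity)
          _ = ((4*ωmax)⁻¹)^J * (secC * maxY J θ) + ((4*ωmax)⁻¹)^(J+1) * S (J+1) θ := by
              rw [pow_succ]; ring
      rw [Finset.sum_range_succ]
      linarith
  have hqω : ∀ J : ℕ, ((4*ωmax)⁻¹)^J * ωmax^J = (1/4:ℝ)^J := by
    intro J
    rw [← mul_pow]
    congr 1
    field_simp
  -- pointwise bound
  set B : ℕ → Θ → ℝ := fun J θ =>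
    (∑ j ∈ Finset.range J, ((4*ωmax)⁻¹)^j * (secC * maxY j θ)) + (1/4:ℝ)^J * W θ with hBdef
  have hB0 : ∀ J θ, 0 ≤ B J θ := by
    intro J θ
    rw [hBdef]
    apply add_nonneg
    · apply Finset.sum_nonneg
      intro j _
      exact mul_nonneg (by positivity) (mul_nonneg hsec_pos.le (hmaxY0 j θ))
    · exact mul_nonneg (by positivity) (hW0 θ)
  have hptB : ∀ J θ, (⨆ τ ∈ Icc τmin τmax, ‖Z' τ θ‖) ≤ B J θ := by
    intro J θ
    apply Real.iSup_le _ (hB0 J θ)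
    intro τ
    apply Real.iSup_le _ (hB0 J θ)
    intro hτ
    rw [hg0]
    have hlast : ((4*ωmax)⁻¹)^J * S J θ ≤ (1/4:ℝ)^J * W θ := by
      calc ((4*ωmax)⁻¹)^J * S J θ ≤ ((4*ωmax)⁻¹)^J * (ωmax^J * W θ) :=
            mul_le_mul_of_nonneg_left (hSle J θ) (by positivity)
        _ = (1/4:ℝ)^J * W θ := by rw [← hqω J]; ring
    calc ‖g 0 τ θ‖ ≤ S 0 θ := hleS 0 θ τ hτ
      _ ≤ _ := hunroll J θ
      _ ≤ B J θ := by rw [hBdef]; simp only; linarith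
  -- a.e. good event
  have hgood : ∀ᵐ θ ∂μ, ∀ k, |ε k θ| = 1 :=
    (ae_all_iff).2 (fun k => rad_ae μ (ε k) (hεmeas k) (hrad k))
  have hCW0 : 0 ≤ CW := by
    rw [hCWdef]
    apply mul_nonneg (norm_nonneg _)
    apply Finset.sum_nonneg
    intro k _
    linarith [ha0 k, hb0 k]
  have hWae : W =ᵐ[μ] (fun _ => CW) := by
    filter_upwards [hgood] with θ hθ
    rw [hWdef, hCWdef]
    simp only
    congr 1
    apply Finset.sum_congr rfl
    intro k _
    rw [hθ k, one_mul]
  have hWint : Integrable W μ := (integrable_const CW).congr hWae.symm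
  have hWint_eq : ∫ θ, W θ ∂μ = CW := by
    rw [integral_congr_ae hWae, integral_const]
    simp
  -- representation of Y as a Rademacher sum
  set rc : ℕ → (Fin N × Fin 8) → Fin m → ℝ := fun n v k =>
    (dirs v.2 * A * ((Complex.I * ωs k)^n * (a k : ℂ)
        * Complex.exp (Complex.I * ωs k * ((pts v.1 : ℂ) - (τ₀:ℂ)))
      - (Complex.I * ωs' k)^n * (b k : ℂ)
        * Complex.exp (Complex.I * ωs' k * ((pts v.1 : ℂ) - (τ₀:ℂ))))).re with hrcdef
  have hYrepr : ∀ n v θ, Y n v θ = ∑ k, rc n v k * ε k θ := by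
    intro n v θ
    rw [hYdef, hrcdef, hgdef]
    simp only
    have hmul : dirs v.2 * (A * ∑ k, (ε k θ : ℂ) *
        ((Complex.I * ωs k)^n * (a k:ℂ)
            * Complex.exp (Complex.I * ωs k * ((pts v.1:ℂ) - (τ₀:ℂ)))
          - (Complex.I * ωs' k)^n * (b k:ℂ)
            * Complex.exp (Complex.I * ωs' k * ((pts v.1:ℂ) - (τ₀:ℂ)))))
        = ∑ k, (ε k θ : ℂ) * (dirs v.2 * A *
        ((Complex.I * ωs k)^n * (a k:ℂ)
            * Complex.exp (Complex.I * ωs k * ((pts v.1:ℂ) - (τ₀:ℂ)))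
          - (Complex.I * ωs' k)^n * (b k:ℂ)
            * Complex.exp (Complex.I * ωs' k * ((pts v.1:ℂ) - (τ₀:ℂ))))) := by
      rw [Finset.mul_sum, Finset.mul_sum]
      apply Finset.sum_congr rfl
      intro k _
      ring
    rw [hmul, Complex.re_sum]
    apply Finset.sum_congr rfl
    intro k _
    rw [Complex.re_ofReal_mul, mul_comm]
  have hrc_bound : ∀ n v k, |rc n v k| ≤ ‖A‖ * (ωmax^n * (a k + b k)) := by
    intro n v k
    rw [hrcdef]
    simp only
    calc |(dirs v.2 * A * _).re| ≤ ‖dirs v.2 * A * _‖ := Complex.abs_re_le_norm _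
      _ = ‖A‖ * ‖((Complex.I * ωs k)^n * (a k : ℂ)
            * Complex.exp (Complex.I * ωs k * ((pts v.1 : ℂ) - (τ₀:ℂ)))
          - (Complex.I * ωs' k)^n * (b k : ℂ)
            * Complex.exp (Complex.I * ωs' k * ((pts v.1 : ℂ) - (τ₀:ℂ))))‖ := by
          rw [norm_mul, norm_mul, norm_dirs, one_mul]
      _ ≤ ‖A‖ * (ωmax^n * (a k + b k)) :=
          mul_le_mul_of_nonneg_left (hnorm_t n k (pts v.1)) (norm_nonneg _)
  have hrc_sq : ∀ n v, ∑ k, (rc n v k)^2 ≤ 2 * (‖A‖ * M₃ * ωmax^n)^2 := by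
    intro n v
    calc ∑ k, (rc n v k)^2 ≤ ∑ k, (‖A‖ * (ωmax^n * (a k + b k)))^2 := by
          apply Finset.sum_le_sum
          intro k _
          have h := hrc_bound n v k
          nlinarith [abs_nonneg (rc n v k), sq_abs (rc n v k)]
      _ = (‖A‖ * ωmax^n)^2 * ∑ k, (a k + b k)^2 := by
          rw [Finset.mul_sum]
          apply Finset.sum_congr rfl
          intro k _
          ring
      _ ≤ (‖A‖ * ωmax^n)^2 * (2 * ∑ k, ((a k)^2 + (b k)^2)) := by
          apply mul_le_mul_of_nonneg_left _ (by positivity)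
          rw [Finset.mul_sum]
          apply Finset.sum_le_sum
          intro k _
          nlinarith [sq_nonneg (a k - b k)]
      _ = 2 * (‖A‖ * M₃ * ωmax^n)^2 := by rw [← hM3sq]; ring
  have hYmeas : ∀ n v, Measurable (Y n v) := by
    intro n v
    simp only [hYdef]
    exact Complex.measurable_re.comp (measurable_const.mul (hgmeas n (pts v.1)))
  have hYabs : ∀ n v θ, |Y n v θ| ≤ ωmax^n * W θ := by
    intro n v θ
    simp only [hYdef]
    calc |(dirs v.2 * g n (pts v.1) θ).re|
        ≤ ‖dirs v.2 * g n (pts v.1) θ‖ := Complex.abs_re_le_norm _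
      _ = ‖g n (pts v.1) θ‖ := by rw [norm_mul, norm_dirs, one_mul]
      _ ≤ ωmax^n * W θ := hgW n (pts v.1) θ
  set σf : ℕ → ℝ := fun n => Real.sqrt 2 * (‖A‖ * M₃ * ωmax^n) with hσdef
  have hσpos : ∀ n, 0 < σf n := by
    intro n
    rw [hσdef]
    simp only
    have h2 : (0:ℝ) < Real.sqrt 2 := by positivity
    positivity
  have hmgfY : ∀ n (t : ℝ), 0 < t → ∀ v, Integrable (fun θ => Real.exp (t * Y n v θ)) μ ∧
      ∫ θ, Real.exp (t * Y n v θ) ∂μ ≤ Real.exp (t^2 * (σf n)^2 / 2) := by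
    intro n t ht v
    constructor
    · apply Integrable.mono' (integrable_const (Real.exp (|t| * (ωmax^n * CW))))
        (((hYmeas n v).const_mul t).exp.aestronglyMeasurable)
      filter_upwards [hWae] with θ hθ
      rw [Real.norm_eq_abs, Real.abs_exp]
      apply Real.exp_le_exp.2
      calc t * Y n v θ ≤ |t * Y n v θ| := le_abs_self _
        _ = |t| * |Y n v θ| := abs_mul _ _
        _ ≤ |t| * (ωmax^n * W θ) := mul_le_mul_of_nonneg_left (hYabs n v θ) (abs_nonneg t)
        _ = |t| * (ωmax^n * CW) := by rw [hθ]
    · have hrw : (fun θ => Real.exp (t * Y n v θ))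
          = fun θ => Real.exp (∑ k, (t * rc n v k) * ε k θ) := by
        funext θ
        rw [hYrepr n v θ, Finset.mul_sum]
        congr 1
        apply Finset.sum_congr rfl
        intro k _
        ring
      rw [hrw]
      calc ∫ θ, Real.exp (∑ k, (t * rc n v k) * ε k θ) ∂μ
          ≤ Real.exp ((∑ k, (t * rc n v k)^2)/2) := rad_mgf ε hεmeas hindep hrad _
        _ ≤ Real.exp (t^2 * (σf n)^2 / 2) := by
            apply Real.exp_le_exp.2
            have h1 : ∑ k, (t * rc n v k)^2 = t^2 * ∑ k, (rc n v k)^2 := by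
              rw [Finset.mul_sum]
              apply Finset.sum_congr rfl
              intro k _
              ring
            have h2 : (σf n)^2 = 2 * (‖A‖ * M₃ * ωmax^n)^2 := by
              rw [hσdef]
              simp only
              rw [mul_pow, Real.sq_sqrt (by norm_num : (0:ℝ) ≤ 2)]
            rw [h1, h2]
            have h3 := hrc_sq n v
            nlinarith [sq_nonneg t]
  have hmaxYmeas : ∀ n, Measurable (maxY n) := by
    intro n
    have h := Finset.measurable_sup' hne (fun v (_ : v ∈ Finset.univ) => hYmeas n v)
    have heq : (Finset.univ.sup' hne fun v => Y n v) = maxY n := by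
      funext θ
      rw [hmaxYdef, Finset.sup'_apply]
    rwa [heq] at h
  have hmaxYint : ∀ n, Integrable (maxY n) μ := by
    intro n
    apply Integrable.mono' (integrable_const (ωmax^n * CW)) (hmaxYmeas n).aestronglyMeasurable
    filter_upwards [hWae] with θ hθ
    rw [Real.norm_eq_abs, abs_le]
    constructor
    · have h1 : Y n (⟨0, hN0⟩, 0) θ ≤ maxY n θ := hYle n _ θ
      have h2 : |Y n (⟨0, hN0⟩, 0) θ| ≤ ωmax^n * CW := by
        rw [← hθ]
        exact hYabs n _ θ
      have h3 := neg_abs_le (Y n (⟨0, hN0⟩, 0) θ)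
      linarith
    · rw [hmaxYdef]
      apply Finset.sup'_le
      intro v _
      have h2 : |Y n v θ| ≤ ωmax^n * CW := by
        rw [← hθ]
        exact hYabs n v θ
      linarith [le_abs_self (Y n v θ)]
  have hVcard : ((Fintype.card (Fin N × Fin 8) : ℕ) : ℝ) = V := by
    rw [hVdef]
    norm_cast
    simp [Fintype.card_prod]
  have hcard2 : 2 ≤ Fintype.card (Fin N × Fin 8) := by
    simp only [Fintype.card_prod, Fintype.card_fin]
    omega
  have hmaxY_bound : ∀ n, ∫ θ, maxY n θ ∂μ ≤ σf n * Real.sqrt (2 * Real.log V) := by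
    intro n
    have hint : Integrable (fun θ => Finset.univ.sup' hne fun v => Y n v θ) μ := hmaxYint n
    have h := maximal hne (Y n) (σf n) (hσpos n) hcard2 (hmgfY n) hint
    rw [hVcard] at h
    exact h
  -- integral of B J
  have hBint : ∀ J, Integrable (B J) μ := by
    intro J
    simp only [hBdef]
    apply Integrable.add
    · apply integrable_finset_sum
      intro j _
      exact ((hmaxYint j).const_mul secC).const_mul _
    · exact hWint.const_mul _
  have hIBeq : ∀ J, ∫ θ, B J θ ∂μ
      = (∑ j ∈ Finset.range J, ((4*ωmax)⁻¹)^j * (secC * ∫ θ, maxY j θ ∂μ))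
        + (1/4:ℝ)^J * CW := by
    intro J
    simp only [hBdef]
    rw [integral_add (integrable_finset_sum _
        (fun j _ => ((hmaxYint j).const_mul secC).const_mul _)) (hWint.const_mul _)]
    rw [integral_finset_sum _ (fun j _ => ((hmaxYint j).const_mul secC).const_mul _)]
    congr 1
    · apply Finset.sum_congr rfl
      intro j _
      rw [integral_const_mul, integral_const_mul]
    · rw [integral_const_mul, hWint_eq]
  have hgeom : ∀ J, (∑ j ∈ Finset.range J, (1/4:ℝ)^j) ≤ 4/3 := by
    intro J
    rw [geom_sum_eq (by norm_num : (1/4:ℝ) ≠ 1)]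
    rw [div_le_iff_of_neg (by norm_num : (1/4:ℝ) - 1 < 0)]
    have h4 : (0:ℝ) ≤ (1/4:ℝ)^J := by positivity
    linarith
  have h22 : Real.sqrt 2 * Real.sqrt 2 = 2 := Real.mul_self_sqrt (by norm_num)
  have hsplit2 : Real.sqrt (2 * Real.log V) = Real.sqrt 2 * Real.sqrt (Real.log V) :=
    Real.sqrt_mul (by norm_num) _
  set K : ℝ := secC * (Real.sqrt 2 * (‖A‖ * M₃) * Real.sqrt (2 * Real.log V)) with hKdef
  have hK0 : 0 ≤ K := by
    rw [hKdef]
    have := hsec_pos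
    positivity
  have hKval : (4/3:ℝ) * K = ‖A‖ * M₃ * (secC * ((8/3) * Real.sqrt (Real.log V))) := by
    rw [hKdef, hsplit2]
    linear_combination ((4:ℝ)/3) * secC * (‖A‖ * M₃) * Real.sqrt (Real.log V) * h22
  have hIB : ∀ J, ∫ θ, B J θ ∂μ
      ≤ ‖A‖ * M₃ * (secC * ((8/3) * Real.sqrt (Real.log V))) + (1/4:ℝ)^J * CW := by
    intro J
    rw [hIBeq J]
    have hterm : ∀ j, ((4*ωmax)⁻¹)^j * (secC * ∫ θ, maxY j θ ∂μ) ≤ (1/4:ℝ)^j * K := by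
      intro j
      have h1 : ((4*ωmax)⁻¹)^j * (secC * ∫ θ, maxY j θ ∂μ)
          ≤ ((4*ωmax)⁻¹)^j * (secC * (σf j * Real.sqrt (2 * Real.log V))) := by
        apply mul_le_mul_of_nonneg_left _ (by positivity)
        exact mul_le_mul_of_nonneg_left (hmaxY_bound j) hsec_pos.le
      have h2 : ((4*ωmax)⁻¹)^j * (secC * (σf j * Real.sqrt (2 * Real.log V)))
          = (1/4:ℝ)^j * K := by
        rw [hσdef, hKdef]
        simp only
        have h3 : ((4*ωmax)⁻¹)^j * (secC * (Real.sqrt 2 * (‖A‖ * M₃ * ωmax^j)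
            * Real.sqrt (2 * Real.log V)))
            = (((4*ωmax)⁻¹)^j * ωmax^j)
              * (secC * (Real.sqrt 2 * (‖A‖ * M₃) * Real.sqrt (2 * Real.log V))) := by
          ring
        rw [h3, hqω j]
      linarith [h1, h2.symm.le, h2.le]
    calc (∑ j ∈ Finset.range J, ((4*ωmax)⁻¹)^j * (secC * ∫ θ, maxY j θ ∂μ)) + (1/4:ℝ)^J * CW
        ≤ (∑ j ∈ Finset.range J, (1/4:ℝ)^j * K) + (1/4:ℝ)^J * CW := by
          have := Finset.sum_le_sum (fun j (_ : j ∈ Finset.range J) => hterm j)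
          linarith
      _ ≤ (4/3) * K + (1/4:ℝ)^J * CW := by
          rw [← Finset.sum_mul]
          have := mul_le_mul_of_nonneg_right (hgeom J) hK0
          linarith
      _ = ‖A‖ * M₃ * (secC * ((8/3) * Real.sqrt (Real.log V))) + (1/4:ℝ)^J * CW := by
          rw [hKval]
  -- combine
  have hLHS0 : 0 ≤ᵐ[μ] (fun θ => ⨆ τ ∈ Icc τmin τmax, ‖Z' τ θ‖) :=
    Filter.Eventually.of_forall (fun θ =>
      Real.iSup_nonneg (fun τ => Real.iSup_nonneg (fun _ => norm_nonneg _)))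
  have hfinal : ∀ J : ℕ, ∫ θ, (⨆ τ ∈ Icc τmin τmax, ‖Z' τ θ‖) ∂μ
      ≤ ‖A‖ * M₃ * (3 * Real.sqrt (Real.log Lr) + 1.61) + (1/4:ℝ)^J * CW := by
    intro J
    have h1 := integral_mono_of_nonneg hLHS0 (hBint J)
      (Filter.Eventually.of_forall (hptB J))
    have h2 := hIB J
    have h3 : secC * ((8/3) * Real.sqrt (Real.log V)) ≤ 3 * Real.sqrt (Real.log Lr) + 1.61 := by
      rw [hsecdef]
      exact final_numeric Lr V hL6 hV8 h8N
    have h4 : ‖A‖ * M₃ * (secC * ((8/3) * Real.sqrt (Real.log V)))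
        ≤ ‖A‖ * M₃ * (3 * Real.sqrt (Real.log Lr) + 1.61) :=
      mul_le_mul_of_nonneg_left h3 (by positivity)
    linarith
  have htend0 : Filter.Tendsto (fun J : ℕ => (1/4:ℝ)^J) Filter.atTop (nhds 0) :=
    tendsto_pow_atTop_nhds_zero_of_lt_one (by norm_num) (by norm_num)
  have htend : Filter.Tendsto
      (fun J : ℕ => ‖A‖ * M₃ * (3 * Real.sqrt (Real.log Lr) + 1.61) + (1/4:ℝ)^J * CW)
      Filter.atTop (nhds (‖A‖ * M₃ * (3 * Real.sqrt (Real.log Lr) + 1.61))) := by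
    have h := (htend0.mul_const CW).const_add (‖A‖ * M₃ * (3 * Real.sqrt (Real.log Lr) + 1.61))
    simpa using h
  exact ge_of_tendsto' htend hfinal

end
end

section
/- Fix δ > 0. Then the random variable M₃ satisfies P( M₃ > 2.37 · max( M₁ , M·√(log(4/δ)) ) ) ≤ δ/4. -/
open MeasureTheory ProbabilityTheory Real Set

noncomputable section

private lemma exp_le_affine {x : ℝ} (h0 : 0 ≤ x) (h1 : x ≤ 1) :
    Real.exp x ≤ 1 + (Real.exp 1 - 1) * x := by
  have h := convexOn_exp.2 (Set.mem_univ (0:ℝ)) (Set.mem_univ (1:ℝ))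
    (by linarith : (0:ℝ) ≤ 1 - x) h0 (by ring)
  simp only [smul_eq_mul, mul_zero, mul_one, zero_add, Real.exp_zero] at h
  calc Real.exp x ≤ (1 - x) * 1 + x * Real.exp 1 := by simpa using h
  _ = 1 + (Real.exp 1 - 1) * x := by ring

/-- **Concentration of `M₃`.**
Fix `δ > 0`.  Then `P(M₃ > 2.37 max(M₁, M√(log(4/δ)))) ≤ δ/4`, where
`M = ‖ŝ‖_∞²`, `M₁ = √(m/|Ω|)‖ŝ‖₄²`, and
`M₃ = (∑_k |ŝ(ω_k)|⁴ + |ŝ(ω'_k)|⁴)^{1/2}`. -/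
theorem M3_concentration
    {Θ : Type*} [MeasurableSpace Θ] (μ : Measure Θ) [IsProbabilityMeasure μ]
    (ωmax : ℝ) (hωmax : 0 < ωmax)
    (shat : ℝ → ℂ) (hmeas : Measurable shat)
    (hbd : ∃ C : ℝ, ∀ x : ℝ, ‖shat x‖ ≤ C)
    (hvanish : ∀ x : ℝ, x ∉ Set.Icc (-ωmax) ωmax → shat x = 0)
    (m : ℕ) (hm : 0 < m)
    (ω ω' : Fin m → Θ → ℝ)
    (hωmeas : ∀ k, Measurable (ω k)) (hω'meas : ∀ k, Measurable (ω' k))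
    (hindep : iIndepFun (Sum.elim ω ω') μ)
    (hunif : ∀ k, μ.map (ω k)
      = (ENNReal.ofReal (2 * ωmax))⁻¹ • volume.restrict (Set.Icc (-ωmax) ωmax))
    (hunif' : ∀ k, μ.map (ω' k)
      = (ENNReal.ofReal (2 * ωmax))⁻¹ • volume.restrict (Set.Icc (-ωmax) ωmax))
    (nrm4 nrmInf : ℝ) (h4pos : 0 < nrm4)
    (h4 : nrm4 ^ 4 = ∫ w in Set.Icc (-ωmax) ωmax, ‖shat w‖ ^ 4)
    (hInf : nrmInf = ⨆ w ∈ Set.Icc (-ωmax) ωmax, ‖shat w‖)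
    (M M₁ : ℝ)
    (hM : M = nrmInf ^ 2)
    (hM₁ : M₁ = Real.sqrt (m / (2 * ωmax)) * nrm4 ^ 2)
    (M₃ : Θ → ℝ)
    (hM₃ : ∀ θ, M₃ θ
      = Real.sqrt (∑ k : Fin m, (‖shat (ω k θ)‖ ^ 4 + ‖shat (ω' k θ)‖ ^ 4)))
    (δ : ℝ) (hδ : 0 < δ) :
    μ {θ | 2.37 * max M₁ (M * Real.sqrt (Real.log (4 / δ))) < M₃ θ}
      ≤ ENNReal.ofReal (δ / 4) := by
  by_cases hδ4 : 4 ≤ δ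
  · refine le_trans (measure_mono (Set.subset_univ _)) ?_
    rw [measure_univ, ← ENNReal.ofReal_one]
    exact ENNReal.ofReal_le_ofReal (by linarith)
  push_neg at hδ4
  set L : ℝ := Real.log (4 / δ) with hLdef
  have hL : 0 ≤ L := Real.log_nonneg (by rw [le_div_iff₀ hδ]; linarith)
  have h2ω : (0:ℝ) < 2 * ωmax := by linarith
  -- boundedness of shat by nrmInf
  obtain ⟨C, hC⟩ := hbd
  have hgbdd : BddAbove (Set.range fun w => ⨆ (_ : w ∈ Set.Icc (-ωmax) ωmax), ‖shat w‖) := by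
    refine ⟨max C 0, ?_⟩
    rintro _ ⟨w, rfl⟩
    show (⨆ (_ : w ∈ Set.Icc (-ωmax) ωmax), ‖shat w‖) ≤ max C 0
    by_cases hw : w ∈ Set.Icc (-ωmax) ωmax
    · rw [ciSup_pos hw]; exact le_max_of_le_left (hC w)
    · haveI : IsEmpty (w ∈ Set.Icc (-ωmax) ωmax) := ⟨hw⟩
      rw [Real.iSup_of_isEmpty]
      exact le_max_right _ _
  have hleIcc : ∀ w ∈ Set.Icc (-ωmax) ωmax, ‖shat w‖ ≤ nrmInf := by
    intro w hw
    rw [hInf]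
    have h0 := le_ciSup hgbdd w
    rwa [ciSup_pos hw] at h0
  have hInf0 : 0 ≤ nrmInf :=
    le_trans (norm_nonneg (shat 0)) (hleIcc 0 (by constructor <;> linarith))
  have hle : ∀ w, ‖shat w‖ ≤ nrmInf := by
    intro w
    by_cases hw : w ∈ Set.Icc (-ωmax) ωmax
    · exact hleIcc w hw
    · rw [hvanish w hw, norm_zero]; exact hInf0
  have hInfpos : 0 < nrmInf := by
    rcases hInf0.lt_or_eq with h | h
    · exact h
    · exfalso
      have hz : ∫ w in Set.Icc (-ωmax) ωmax, ‖shat w‖ ^ 4 = 0 :=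
        setIntegral_eq_zero_of_forall_eq_zero fun w hw => by
          have h1 : ‖shat w‖ ≤ 0 := h ▸ hleIcc w hw
          have h2 : ‖shat w‖ = 0 := le_antisymm h1 (norm_nonneg _)
          rw [h2]; norm_num
      have := pow_pos h4pos 4
      rw [h4, hz] at this; exact lt_irrefl _ this
  -- setup
  set B : ℝ := nrmInf ^ 4 with hBdef
  have hBpos : 0 < B := by positivity
  set t : ℝ := B⁻¹ with htdef
  have htpos : 0 < t := by positivity
  set σ4 : ℝ := nrm4 ^ 4 / (2 * ωmax) with hσ4def
  have hσ4pos : 0 < σ4 := by positivity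
  set Y : (Fin m ⊕ Fin m) → Θ → ℝ := fun i θ => ‖shat (Sum.elim ω ω' i θ)‖ ^ 4 with hYdef
  have hYmeas : ∀ i, Measurable (Y i) := by
    rintro (k | k)
    · exact ((hmeas.comp (hωmeas k)).norm).pow_const 4
    · exact ((hmeas.comp (hω'meas k)).norm).pow_const 4
  have hY0 : ∀ i θ, 0 ≤ Y i θ := fun i θ => by positivity
  have hYB : ∀ i θ, Y i θ ≤ B := fun i θ =>
    pow_le_pow_left₀ (norm_nonneg _) (hle _) 4
  have hYindep : iIndepFun Y μ :=
    hindep.comp (fun _ x => ‖shat x‖ ^ 4) (fun _ => (hmeas.norm).pow_const 4)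
  have htY1 : ∀ i θ, t * Y i θ ≤ 1 := fun i θ => by
    calc t * Y i θ ≤ t * B := mul_le_mul_of_nonneg_left (hYB i θ) htpos.le
    _ = 1 := inv_mul_cancel₀ hBpos.ne'
  -- expectation of each Y i
  have hEY : ∀ i, ∫ θ, Y i θ ∂μ = σ4 := by
    have key : ∀ (f : Θ → ℝ), Measurable f →
        μ.map f = (ENNReal.ofReal (2 * ωmax))⁻¹ • volume.restrict (Set.Icc (-ωmax) ωmax) →
        ∫ θ, ‖shat (f θ)‖ ^ 4 ∂μ = σ4 := by
      intro f hf hmap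
      have h1 : ∫ θ, ‖shat (f θ)‖ ^ 4 ∂μ
          = ∫ w, ‖shat w‖ ^ 4 ∂(μ.map f) :=
        (integral_map hf.aemeasurable ((hmeas.norm.pow_const 4).aestronglyMeasurable)).symm
      rw [h1, hmap, integral_smul_measure, ← h4,
        ENNReal.toReal_inv, ENNReal.toReal_ofReal h2ω.le, smul_eq_mul, hσ4def]
      ring
    rintro (k | k)
    · exact key (ω k) (hωmeas k) (hunif k)
    · exact key (ω' k) (hω'meas k) (hunif' k)
  -- integrability facts
  have hYint : ∀ i, Integrable (Y i) μ := by
    intro i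
    refine Integrable.mono' (integrable_const B) (hYmeas i).aestronglyMeasurable
      (Filter.Eventually.of_forall fun θ => ?_)
    rw [Real.norm_eq_abs, abs_of_nonneg (hY0 i θ)]
    exact hYB i θ
  have hint : ∀ i, Integrable (fun θ => Real.exp (t * Y i θ)) μ := by
    intro i
    refine Integrable.mono' (integrable_const (Real.exp 1))
      (((hYmeas i).const_mul t).exp.aestronglyMeasurable)
      (Filter.Eventually.of_forall fun θ => ?_)
    rw [Real.norm_eq_abs, abs_of_nonneg (Real.exp_pos _).le]
    exact Real.exp_le_exp.2 (htY1 i θ)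
  set S : Θ → ℝ := fun θ => ∑ i : Fin m ⊕ Fin m, Y i θ with hSdef
  have hSsum : (∑ i : Fin m ⊕ Fin m, Y i) = S := by
    funext θ; rw [Finset.sum_apply]
  have hSmeas : Measurable S := Finset.measurable_sum Finset.univ fun i _ => hYmeas i
  have hintS : Integrable (fun θ => Real.exp (t * S θ)) μ := by
    refine Integrable.mono' (integrable_const (Real.exp (Fintype.card (Fin m ⊕ Fin m))))
      ((hSmeas.const_mul t).exp.aestronglyMeasurable)
      (Filter.Eventually.of_forall fun θ => ?_)
    rw [Real.norm_eq_abs, abs_of_nonneg (Real.exp_pos _).le]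
    refine Real.exp_le_exp.2 ?_
    rw [hSdef, Finset.mul_sum]
    calc ∑ i : Fin m ⊕ Fin m, t * Y i θ ≤ ∑ _i : Fin m ⊕ Fin m, (1:ℝ) :=
      Finset.sum_le_sum fun i _ => htY1 i θ
    _ = Fintype.card (Fin m ⊕ Fin m) := by simp
  -- event inclusion
  set T : ℝ := max M₁ (M * Real.sqrt L) with hTdef
  have hM₁0 : 0 ≤ M₁ := by rw [hM₁]; positivity
  have hT0 : 0 ≤ T := le_trans hM₁0 (le_max_left _ _)
  set ε : ℝ := (2.37 * T) ^ 2 with hεdef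
  have hsub : {θ | 2.37 * T < M₃ θ} ⊆ {θ | ε ≤ S θ} := by
    intro θ hθ
    simp only [Set.mem_setOf_eq] at hθ ⊢
    have hSθ : S θ
        = ∑ k : Fin m, (‖shat (ω k θ)‖ ^ 4 + ‖shat (ω' k θ)‖ ^ 4) := by
      show (∑ i : Fin m ⊕ Fin m, Y i θ) = _
      rw [Fintype.sum_sum_type, ← Finset.sum_add_distrib]
      rfl
    rw [hM₃ θ] at hθ
    have h2 := (Real.lt_sqrt (by positivity)).1 hθ
    rw [hSθ]
    exact le_of_lt h2
  -- Chernoff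
  have hcher := measure_ge_le_exp_mul_mgf (μ := μ) (X := S) ε htpos.le hintS
  have hprod := hYindep.mgf_sum (t := t) hYmeas Finset.univ
  rw [hSsum] at hprod
  have hmgf : ∀ i : Fin m ⊕ Fin m, mgf (Y i) μ t ≤ Real.exp ((Real.exp 1 - 1) * (t * σ4)) := by
    intro i
    have haff : Integrable (fun θ => 1 + (Real.exp 1 - 1) * (t * Y i θ)) μ := by
      have : Integrable (fun θ => ((Real.exp 1 - 1) * t) * Y i θ) μ := (hYint i).const_mul _
      simpa [mul_assoc] using (integrable_const (1:ℝ)).add this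
    calc mgf (Y i) μ t = ∫ θ, Real.exp (t * Y i θ) ∂μ := rfl
    _ ≤ ∫ θ, (1 + (Real.exp 1 - 1) * (t * Y i θ)) ∂μ := by
        refine integral_mono (hint i) haff fun θ => ?_
        exact exp_le_affine (by positivity) (htY1 i θ)
    _ = 1 + (Real.exp 1 - 1) * (t * σ4) := by
        simp_rw [← mul_assoc]
        rw [integral_add (integrable_const 1) ((hYint i).const_mul _),
          integral_const, probReal_univ, integral_const_mul, hEY i]
        simp [mul_assoc]
    _ ≤ Real.exp ((Real.exp 1 - 1) * (t * σ4)) := by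
        have := Real.add_one_le_exp ((Real.exp 1 - 1) * (t * σ4))
        linarith
  -- combine mgf bound
  have hmgfS : mgf S μ t
      ≤ Real.exp ((2 * m) * ((Real.exp 1 - 1) * (t * σ4))) := by
    rw [hprod]
    calc ∏ i : Fin m ⊕ Fin m, mgf (Y i) μ t
        ≤ ∏ _i : Fin m ⊕ Fin m, Real.exp ((Real.exp 1 - 1) * (t * σ4)) :=
          Finset.prod_le_prod (fun i _ => mgf_nonneg) (fun i _ => hmgf i)
    _ = Real.exp ((Real.exp 1 - 1) * (t * σ4)) ^ (Fintype.card (Fin m ⊕ Fin m)) :=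
          Finset.prod_const _
    _ = Real.exp ((2 * m) * ((Real.exp 1 - 1) * (t * σ4))) := by
          rw [← Real.exp_nat_mul]
          congr 1
          push_cast [Fintype.card_sum, Fintype.card_fin]
          ring
  -- numeric facts
  have hmσ : (m : ℝ) * σ4 = M₁ ^ 2 := by
    rw [hM₁, mul_pow, Real.sq_sqrt (by positivity), hσ4def]
    ring
  have hMsqB : M ^ 2 = B := by rw [hM, hBdef]; ring
  have hTsq1 : M₁ ^ 2 ≤ T ^ 2 := pow_le_pow_left₀ hM₁0 (le_max_left _ _) 2
  have hTsq2 : B * L ≤ T ^ 2 := by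
    have hM0 : 0 ≤ M := by rw [hM]; positivity
    have h1 : (M * Real.sqrt L) ^ 2 ≤ T ^ 2 :=
      pow_le_pow_left₀ (by positivity) (le_max_right _ _) 2
    calc B * L = (M * Real.sqrt L) ^ 2 := by
          rw [mul_pow, Real.sq_sqrt hL, hMsqB]
    _ ≤ T ^ 2 := h1
  have he : Real.exp 1 < 2.7182818286 := Real.exp_one_lt_d9
  have he1 : (2:ℝ) ≤ Real.exp 1 := by
    have := Real.add_one_le_exp (1:ℝ); linarith
  -- exponent bound
  have hexp : -t * ε + (2 * m) * ((Real.exp 1 - 1) * (t * σ4)) ≤ -L := by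
    have hε : ε = 5.6169 * T ^ 2 := by rw [hεdef, mul_pow]; norm_num
    have h1 : 2 * (Real.exp 1 - 1) * M₁ ^ 2 ≤ 3.4365636572 * T ^ 2 := by
      nlinarith [hTsq1, sq_nonneg M₁, he, he1]
    have h3 : B * L ≤ 5.6169 * T ^ 2 - 2 * (Real.exp 1 - 1) * M₁ ^ 2 := by
      have hBL0 : 0 ≤ B * L := mul_nonneg hBpos.le hL
      linarith [h1, hTsq2, hBL0]
    have h4 : L ≤ B⁻¹ * (5.6169 * T ^ 2 - 2 * (Real.exp 1 - 1) * M₁ ^ 2) := by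
      have := mul_le_mul_of_nonneg_left h3 (inv_nonneg.2 hBpos.le)
      rwa [← mul_assoc, inv_mul_cancel₀ hBpos.ne', one_mul] at this
    have hgoal : -t * ε + (2 * m : ℝ) * ((Real.exp 1 - 1) * (t * σ4))
        = -(B⁻¹ * (5.6169 * T ^ 2 - 2 * (Real.exp 1 - 1) * M₁ ^ 2)) := by
      rw [hε, htdef, show (2 * (m : ℝ)) * ((Real.exp 1 - 1) * (B⁻¹ * σ4))
        = 2 * (Real.exp 1 - 1) * B⁻¹ * ((m : ℝ) * σ4) by ring, hmσ]
      ring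
    rw [hgoal]
    linarith [h4]
  -- final chain
  have hfinal : (μ {θ | ε ≤ S θ}).toReal ≤ δ / 4 := by
    calc (μ {θ | ε ≤ S θ}).toReal
        ≤ Real.exp (-t * ε) * mgf S μ t := hcher
    _ ≤ Real.exp (-t * ε) * Real.exp ((2 * m) * ((Real.exp 1 - 1) * (t * σ4))) :=
        mul_le_mul_of_nonneg_left hmgfS (Real.exp_pos _).le
    _ = Real.exp (-t * ε + (2 * m) * ((Real.exp 1 - 1) * (t * σ4))) := (Real.exp_add _ _).symm
    _ ≤ Real.exp (-L) := Real.exp_le_exp.2 hexp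
    _ = δ / 4 := by
        rw [hLdef, ← Real.log_inv, Real.exp_log (by positivity), inv_div]
  calc μ {θ | 2.37 * T < M₃ θ} ≤ μ {θ | ε ≤ S θ} :=
        measure_mono hsub
  _ = ENNReal.ofReal ((μ {θ | ε ≤ S θ}).toReal) :=
        (ENNReal.ofReal_toReal (measure_ne_top μ _)).symm
  _ ≤ ENNReal.ofReal (δ / 4) := ENNReal.ofReal_le_ofReal hfinal

end
end

section
/- Fix δ > 0 and set a = 1+√3. Suppose m ≥ a² · max( |Ω|·‖ŝ‖₄⁴/‖ŝ‖₂⁴ , |Ω|·‖ŝ‖_∞²/‖ŝ‖₂² ) · log(2/δ). Then the random variable M₄² = ∑_{k=1}^m |ŝ(ω_k)|² satisfies P( M₄² > 2·m·|Ω|^{−1}·‖ŝ‖₂² ) ≤ δ/2. -/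
open MeasureTheory ProbabilityTheory Real Set

set_option maxHeartbeats 1000000
noncomputable section

/-- elementary: `exp u ≤ 1 + u + (3/2) u²` for `u ∈ [0, 1/3]`. -/
lemma exp_le_aux {u : ℝ} (hu0 : 0 ≤ u) (hu : u ≤ 1/3) :
    Real.exp u ≤ 1 + u + (3/2) * u ^ 2 := by
  have h1 : 1 - u ≤ Real.exp (-u) := by
    have := Real.add_one_le_exp (-u); linarith
  have h2 : Real.exp u * (1 - u) ≤ 1 := by
    calc Real.exp u * (1 - u) ≤ Real.exp u * Real.exp (-u) := by
          exact mul_le_mul_of_nonneg_left h1 (Real.exp_pos u).le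
      _ = 1 := by rw [← Real.exp_add]; simp
  have h3 : (0:ℝ) < 1 - u := by linarith
  nlinarith [Real.exp_pos u, sq_nonneg u, mul_nonneg hu0 (sq_nonneg u)]

/-- **Bernstein bound for `M₄²`.**
Fix `δ > 0` and set `a = 1+√3`.  If
`m ≥ a² max(|Ω|‖ŝ‖₄⁴/‖ŝ‖₂⁴, |Ω|‖ŝ‖_∞²/‖ŝ‖₂²) log(2/δ)`, then
`P(M₄² > 2m|Ω|⁻¹‖ŝ‖₂²) ≤ δ/2`, where `M₄² = ∑_k |ŝ(ω_k)|²`. -/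
theorem M4_concentration
    {Θ : Type*} [MeasurableSpace Θ] (μ : Measure Θ) [IsProbabilityMeasure μ]
    (ωmax : ℝ) (hωmax : 0 < ωmax)
    (shat : ℝ → ℂ) (hmeas : Measurable shat)
    (hbd : ∃ C : ℝ, ∀ x : ℝ, ‖shat x‖ ≤ C)
    (hvanish : ∀ x : ℝ, x ∉ Set.Icc (-ωmax) ωmax → shat x = 0)
    (m : ℕ) (hm : 0 < m)
    (ω : Fin m → Θ → ℝ) (hωmeas : ∀ k, Measurable (ω k))
    (hindep : iIndepFun ω μ)
    (hunif : ∀ k, μ.map (ω k)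
      = (ENNReal.ofReal (2 * ωmax))⁻¹ • volume.restrict (Set.Icc (-ωmax) ωmax))
    (nrm2 nrm4 nrmInf : ℝ) (h2pos : 0 < nrm2)
    (h2 : nrm2 ^ 2 = ∫ w in Set.Icc (-ωmax) ωmax, ‖shat w‖ ^ 2)
    (h4 : nrm4 ^ 4 = ∫ w in Set.Icc (-ωmax) ωmax, ‖shat w‖ ^ 4)
    (hInf : nrmInf = ⨆ w ∈ Set.Icc (-ωmax) ωmax, ‖shat w‖)
    (δ : ℝ) (hδ : 0 < δ)
    (hmBnd : (m : ℝ) ≥ (1 + Real.sqrt 3) ^ 2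
      * max ((2 * ωmax) * nrm4 ^ 4 / nrm2 ^ 4) ((2 * ωmax) * nrmInf ^ 2 / nrm2 ^ 2)
      * Real.log (2 / δ)) :
    μ {θ | 2 * m * (2 * ωmax)⁻¹ * nrm2 ^ 2 < ∑ k : Fin m, ‖shat (ω k θ)‖ ^ 2}
      ≤ ENNReal.ofReal (δ / 2) := by
  classical
  -- trivial case δ ≥ 2
  rcases le_or_gt 2 δ with hδ2 | hδ2
  · refine le_trans prob_le_one ?_
    rw [← ENNReal.ofReal_one]
    exact ENNReal.ofReal_le_ofReal (by linarith)
  obtain ⟨C, hC⟩ := hbd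
  set K : Set ℝ := Set.Icc (-ωmax) ωmax with hK
  set V : ℝ := 2 * ωmax with hV
  have hVpos : 0 < V := by positivity
  set f : ℝ → ℝ := fun w => ‖shat w‖ ^ 2 with hf
  have hfmeas : Measurable f := (hmeas.norm).pow_const 2
  -- pointwise bound by nrmInf
  have hInfK : ∀ x ∈ K, ‖shat x‖ ≤ nrmInf := by
    intro x hx
    have hbdd : BddAbove (Set.range fun w => ⨆ _ : w ∈ K, ‖shat w‖) := by
      refine ⟨max C 0, ?_⟩
      rintro y ⟨w, rfl⟩
      exact Real.iSup_le (fun _ => (hC w).trans (le_max_left _ _)) (le_max_right _ _)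
    have := le_ciSup hbdd x
    rw [ciSup_pos hx] at this
    exact this.trans_eq hInf.symm
  have hInfAll : ∀ x : ℝ, ‖shat x‖ ≤ nrmInf := by
    intro x
    by_cases hx : x ∈ K
    · exact hInfK x hx
    · rw [hvanish x hx, norm_zero]
      exact le_trans (norm_nonneg _) (hInfK 0 ⟨by linarith, by linarith⟩)
  have hInfpos : 0 < nrmInf := by
    by_contra h
    push_neg at h
    have hz : ∀ x : ℝ, shat x = 0 := fun x =>
      norm_le_zero_iff.mp ((hInfAll x).trans h)
    have : nrm2 ^ 2 = 0 := by
      rw [h2]; simp [hf, hz]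
    nlinarith
  set B : ℝ := nrmInf ^ 2 with hB
  have hBpos : 0 < B := by positivity
  set lam : ℝ := 1 / (3 * B) with hlam
  have hlampos : 0 < lam := by positivity
  have hfB : ∀ x, f x ≤ B := fun x => by
    simpa [hf, hB] using pow_le_pow_left₀ (norm_nonneg _) (hInfAll x) 2
  have hf0 : ∀ x, 0 ≤ f x := fun x => by positivity
  -- integrability on K
  have hμK : volume K ≠ ⊤ := by
    rw [hK, Real.volume_Icc]; exact ENNReal.ofReal_ne_top
  have hint_f : IntegrableOn f K volume := by
    refine Integrable.mono'
      (show IntegrableOn (fun _ : ℝ => B) K volume from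
        integrableOn_const hμK)
      hfmeas.aestronglyMeasurable ?_
    filter_upwards with x
    rw [Real.norm_eq_abs, abs_of_nonneg (hf0 x)]; exact hfB x
  have hint_f2 : IntegrableOn (fun x => f x ^ 2) K volume := by
    refine Integrable.mono'
      (show IntegrableOn (fun _ : ℝ => B ^ 2) K volume from
        integrableOn_const hμK)
      ((hfmeas.pow_const 2).aestronglyMeasurable) ?_
    filter_upwards with x
    rw [Real.norm_eq_abs, abs_of_nonneg (by positivity)]
    exact pow_le_pow_left₀ (hf0 x) (hfB x) 2
  have hint_exp : IntegrableOn (fun x => Real.exp (lam * f x)) K volume := by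
    refine Integrable.mono'
      (show IntegrableOn (fun _ : ℝ => Real.exp (lam * B)) K volume from
        integrableOn_const hμK)
      ((hfmeas.const_mul lam).exp.aestronglyMeasurable) ?_
    filter_upwards with x
    rw [Real.norm_eq_abs, abs_of_nonneg (Real.exp_pos _).le, Real.exp_le_exp]
    exact mul_le_mul_of_nonneg_left (hfB x) hlampos.le
  -- volume of K
  have hKvol : (volume K).toReal = V := by
    simp [hK, hV, Real.volume_Icc]
    rw [ENNReal.toReal_ofReal (by linarith)]
    ring
  -- key moment facts
  have hf2int : ∫ x in K, f x = nrm2 ^ 2 := h2.symm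
  have hf4int : ∫ x in K, f x ^ 2 = nrm4 ^ 4 := by
    rw [h4]
    congr 1 with x
    rw [hf, ← pow_mul]
  have h42 : nrm4 ^ 4 ≤ B * nrm2 ^ 2 := by
    rw [← hf4int, h2]
    rw [← integral_const_mul]
    refine integral_mono hint_f2 (hint_f.const_mul B) ?_
    intro x
    simp only
    calc f x ^ 2 = f x * f x := sq (f x) ▸ (sq (f x)).symm ▸ by ring
      _ ≤ B * f x := mul_le_mul_of_nonneg_right (hfB x) (hf0 x)
      _ = B * ‖shat x‖ ^ 2 := rfl
  -- abbreviations
  set μ₁ : ℝ := V⁻¹ * nrm2 ^ 2 with hμ₁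
  have hμ₁pos : 0 < μ₁ := by positivity
  -- per-coordinate mgf bound
  set X : Fin m → Θ → ℝ := fun k θ => f (ω k θ) with hX
  have hXmeas : ∀ k, Measurable (X k) := fun k => hfmeas.comp (hωmeas k)
  have hXindep : iIndepFun X μ :=
    hindep.comp (fun _ => f) (fun _ => hfmeas)
  have hmgf_eq : ∀ k, mgf (X k) μ lam = V⁻¹ * ∫ x in K, Real.exp (lam * f x) := by
    intro k
    have h1 : mgf (X k) μ lam = ∫ θ, Real.exp (lam * f (ω k θ)) ∂μ := rfl
    rw [h1, ← integral_map (hωmeas k).aemeasurable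
      ((hfmeas.const_mul lam).exp.aestronglyMeasurable), hunif k,
      integral_smul_measure]
    simp only [smul_eq_mul]
    congr 1
    rw [ENNReal.toReal_inv, ENNReal.toReal_ofReal hVpos.le]
  have hmgf_le : ∀ k, mgf (X k) μ lam ≤ Real.exp ((3/2) * lam * μ₁) := by
    intro k
    rw [hmgf_eq k]
    have hpt : ∀ x ∈ K, Real.exp (lam * f x) ≤
        1 + lam * f x + (3/2) * lam ^ 2 * f x ^ 2 := by
      intro x _
      have hu0 : 0 ≤ lam * f x := mul_nonneg hlampos.le (hf0 x)
      have hu : lam * f x ≤ 1/3 := by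
        rw [hlam]
        rw [div_mul_eq_mul_div, one_mul, div_le_div_iff₀ (by positivity) (by norm_num)]
        nlinarith [hfB x]
      have := exp_le_aux hu0 hu
      calc Real.exp (lam * f x) ≤ 1 + lam * f x + (3/2) * (lam * f x) ^ 2 := this
        _ = 1 + lam * f x + (3/2) * lam ^ 2 * f x ^ 2 := by ring
    have hint_rhs : IntegrableOn
        (fun x => 1 + lam * f x + (3/2) * lam ^ 2 * f x ^ 2) K volume := by
      exact ((integrableOn_const hμK).add
        (hint_f.const_mul lam)).add (hint_f2.const_mul _)
    have hIle : ∫ x in K, Real.exp (lam * f x) ≤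
        ∫ x in K, (1 + lam * f x + (3/2) * lam ^ 2 * f x ^ 2) := by
      refine integral_mono_ae hint_exp hint_rhs ?_
      filter_upwards [ae_restrict_mem measurableSet_Icc] with x hx
      exact hpt x hx
    have hconst : IntegrableOn (fun _ : ℝ => (1:ℝ)) K volume :=
      integrableOn_const hμK
    have eA : ∫ x in K, (1 + lam * f x + (3/2) * lam ^ 2 * f x ^ 2)
        = (∫ x in K, (1 + lam * f x)) + ∫ x in K, (3/2) * lam ^ 2 * f x ^ 2 :=
      integral_add (hconst.add (hint_f.const_mul lam)) (hint_f2.const_mul _)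
    have eB : ∫ x in K, (1 + lam * f x) = (∫ x in K, (1:ℝ)) + ∫ x in K, lam * f x :=
      integral_add hconst (hint_f.const_mul lam)
    have hIval : ∫ x in K, (1 + lam * f x + (3/2) * lam ^ 2 * f x ^ 2)
        = V + lam * nrm2 ^ 2 + (3/2) * lam ^ 2 * nrm4 ^ 4 := by
      rw [eA, eB, integral_const_mul, integral_const_mul, hf2int, hf4int,
        integral_const]
      simp [measureReal_def, hKvol]
    have hstep : V⁻¹ * ∫ x in K, Real.exp (lam * f x)
        ≤ 1 + (3/2) * lam * μ₁ := by
      have h1 : V⁻¹ * ∫ x in K, Real.exp (lam * f x)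
          ≤ V⁻¹ * (V + lam * nrm2 ^ 2 + (3/2) * lam ^ 2 * nrm4 ^ 4) := by
        apply mul_le_mul_of_nonneg_left _ (by positivity)
        rw [← hIval]; exact hIle
      refine h1.trans ?_
      have hlamB : lam * B = 1/3 := by
        rw [hlam]; field_simp
      have h42' : (3/2) * lam ^ 2 * nrm4 ^ 4 ≤ (1/2) * lam * nrm2 ^ 2 := by
        have e : (3/2) * lam ^ 2 * (B * nrm2 ^ 2) = (1/2) * lam * nrm2 ^ 2 := by
          linear_combination ((3:ℝ)/2) * lam * nrm2 ^ 2 * hlamB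
        calc (3/2) * lam ^ 2 * nrm4 ^ 4 ≤ (3/2) * lam ^ 2 * (B * nrm2 ^ 2) :=
            mul_le_mul_of_nonneg_left h42 (by positivity)
          _ = (1/2) * lam * nrm2 ^ 2 := e
      have hexpand : V⁻¹ * (V + lam * nrm2 ^ 2 + (1/2) * lam * nrm2 ^ 2)
          = 1 + (3/2) * lam * μ₁ := by
        rw [hμ₁]; field_simp; try ring
      calc V⁻¹ * (V + lam * nrm2 ^ 2 + (3/2) * lam ^ 2 * nrm4 ^ 4)
          ≤ V⁻¹ * (V + lam * nrm2 ^ 2 + (1/2) * lam * nrm2 ^ 2) := by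
            apply mul_le_mul_of_nonneg_left _ (by positivity)
            linarith
        _ = 1 + (3/2) * lam * μ₁ := hexpand
    refine hstep.trans ?_
    have := Real.add_one_le_exp ((3/2) * lam * μ₁)
    linarith
  -- Chernoff
  set S : Θ → ℝ := fun θ => ∑ k : Fin m, X k θ with hS
  have hSsum : S = ∑ k : Fin m, X k := by
    ext θ; simp [hS]
  have hSmeas : Measurable S := by
    apply Finset.measurable_sum
    exact fun k _ => hXmeas k
  have hint_expS : Integrable (fun θ => Real.exp (lam * S θ)) μ := by
    refine Integrable.mono' (integrable_const (Real.exp (lam * (m * B))))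
      ((hSmeas.const_mul lam).exp.aestronglyMeasurable) ?_
    filter_upwards with θ
    rw [Real.norm_eq_abs, abs_of_nonneg (Real.exp_pos _).le, Real.exp_le_exp]
    apply mul_le_mul_of_nonneg_left _ hlampos.le
    calc S θ ≤ ∑ _k : Fin m, B := Finset.sum_le_sum (fun k _ => hfB (ω k θ))
      _ = m * B := by simp [mul_comm]
  set t : ℝ := 2 * m * V⁻¹ * nrm2 ^ 2 with ht
  have htval : t = 2 * m * μ₁ := by rw [ht, hμ₁]; ring
  have hchern : (μ {θ | t ≤ S θ}).toReal ≤ Real.exp (-lam * t) * mgf S μ lam :=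
    measure_ge_le_exp_mul_mgf t hlampos.le hint_expS
  have hmgfS : mgf S μ lam ≤ Real.exp ((3/2) * lam * μ₁) ^ m := by
    rw [hSsum, hXindep.mgf_sum hXmeas]
    calc ∏ k : Fin m, mgf (X k) μ lam
        ≤ ∏ _k : Fin m, Real.exp ((3/2) * lam * μ₁) :=
          Finset.prod_le_prod (fun k _ => mgf_nonneg) (fun k _ => hmgf_le k)
      _ = Real.exp ((3/2) * lam * μ₁) ^ m := by simp
  have hfinal_real : (μ {θ | t ≤ S θ}).toReal ≤ Real.exp (- (m * lam * μ₁ / 2)) := by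
    refine hchern.trans ?_
    calc Real.exp (-lam * t) * mgf S μ lam
        ≤ Real.exp (-lam * t) * Real.exp ((3/2) * lam * μ₁) ^ m :=
          mul_le_mul_of_nonneg_left hmgfS (Real.exp_pos _).le
      _ = Real.exp (-lam * t + m * ((3/2) * lam * μ₁)) := by
          rw [← Real.exp_nat_mul, ← Real.exp_add]
      _ = Real.exp (- (m * lam * μ₁ / 2)) := by
          congr 1; rw [htval]; ring
  -- numeric conclusion
  have hL : 0 < Real.log (2 / δ) := Real.log_pos (by rw [lt_div_iff₀ hδ]; linarith)
  have ha2 : (6:ℝ) ≤ (1 + Real.sqrt 3) ^ 2 := by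
    nlinarith [Real.sq_sqrt (by norm_num : (3:ℝ) ≥ 0), Real.sqrt_nonneg 3,
      Real.sqrt_le_sqrt (by norm_num : (3:ℝ) ≤ 4)]
  have hmax : V * nrmInf ^ 2 / nrm2 ^ 2
      ≤ max ((2 * ωmax) * nrm4 ^ 4 / nrm2 ^ 4) ((2 * ωmax) * nrmInf ^ 2 / nrm2 ^ 2) := by
    rw [hV]; exact le_max_right _ _
  have hm6 : (m : ℝ) ≥ 6 * (V * B / nrm2 ^ 2) * Real.log (2 / δ) := by
    have h1 : (1 + Real.sqrt 3) ^ 2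
        * max ((2 * ωmax) * nrm4 ^ 4 / nrm2 ^ 4) ((2 * ωmax) * nrmInf ^ 2 / nrm2 ^ 2)
        * Real.log (2 / δ)
        ≥ 6 * (V * B / nrm2 ^ 2) * Real.log (2 / δ) := by
      apply mul_le_mul_of_nonneg_right _ hL.le
      have hpos : 0 ≤ V * B / nrm2 ^ 2 := by positivity
      calc 6 * (V * B / nrm2 ^ 2) ≤ (1 + Real.sqrt 3) ^ 2 * (V * B / nrm2 ^ 2) :=
            mul_le_mul_of_nonneg_right ha2 hpos
        _ ≤ (1 + Real.sqrt 3) ^ 2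
            * max ((2 * ωmax) * nrm4 ^ 4 / nrm2 ^ 4) ((2 * ωmax) * nrmInf ^ 2 / nrm2 ^ 2) := by
            apply mul_le_mul_of_nonneg_left _ (by positivity)
            rw [hB]; exact hmax
    linarith [hmBnd, h1]
  have hexp_le : Real.exp (- (m * lam * μ₁ / 2)) ≤ δ / 2 := by
    have hkey : Real.log (2 / δ) ≤ m * lam * μ₁ / 2 := by
      have hlamval : lam * μ₁ / 2 = nrm2 ^ 2 / (6 * B * V) := by
        rw [hlam, hμ₁]; field_simp; ring
      have h1 : m * lam * μ₁ / 2 = (m : ℝ) * (nrm2 ^ 2 / (6 * B * V)) := by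
        rw [← hlamval]; ring
      rw [h1]
      have h2 : 6 * (V * B / nrm2 ^ 2) * Real.log (2 / δ) * (nrm2 ^ 2 / (6 * B * V))
          = Real.log (2 / δ) := by
        field_simp
      calc Real.log (2 / δ)
          = 6 * (V * B / nrm2 ^ 2) * Real.log (2 / δ) * (nrm2 ^ 2 / (6 * B * V)) := h2.symm
        _ ≤ (m : ℝ) * (nrm2 ^ 2 / (6 * B * V)) :=
            mul_le_mul_of_nonneg_right hm6 (by positivity)
    calc Real.exp (- (m * lam * μ₁ / 2)) ≤ Real.exp (- Real.log (2 / δ)) :=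
        Real.exp_le_exp.mpr (by linarith)
      _ = δ / 2 := by
        rw [Real.exp_neg, Real.exp_log (by positivity)]
        field_simp
  -- assemble
  have hsub : {θ | t < S θ} ⊆ {θ | t ≤ S θ} := Set.setOf_subset_setOf.mpr (fun θ => le_of_lt)
  have hgoal_set : {θ | 2 * m * (2 * ωmax)⁻¹ * nrm2 ^ 2 < ∑ k : Fin m, ‖shat (ω k θ)‖ ^ 2}
      = {θ | t < S θ} := by
    ext θ; simp only [Set.mem_setOf_eq, ht, hV, hS, hX, hf]
  rw [hgoal_set]
  calc μ {θ | t < S θ} ≤ μ {θ | t ≤ S θ} := measure_mono hsub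
    _ ≤ ENNReal.ofReal (δ / 2) := by
      rw [ENNReal.le_ofReal_iff_toReal_le (measure_ne_top μ _) (by positivity)]
      exact hfinal_real.trans hexp_le

end
end
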